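/- arXiv:1105.1307 — 4 statements merged into one kernel-verified Lean document; each statement's English description precedes it below -/
import Mathlib

section
/- Let a_1,…,a_N be complex numbers and let S(α) = Σ_{n=1}^N a_n e(nα). Then for every real α and every δ with 0 < δ, one has |S(α)|² ≥ (1/δ)·∫_{α−δ/2}^{α+δ/2} |S(u)|² du − ∫_{α−δ/2}^{α+δ/2} |S(u)·S'(u)| du, where S'(u) = Σ_{n=1}^N 2πi·n·a_n e(nu) is the derivative of S. -/
open MeasureTheory intervalIntegral Real

/-- Gallagher-type pointwise lower bound: for the exponential sum
`S(α) = Σ_{n=1}^N a_n e(nα)` and every `δ > 0`,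
`|S(α)|² ≥ (1/δ)∫_{α−δ/2}^{α+δ/2}|S|² − ∫_{α−δ/2}^{α+δ/2}|S·S'|`. -/
theorem pointwise_lower_bound (N : ℕ) (a : ℕ → ℂ) (S S' : ℝ → ℂ)
    (hS : ∀ u : ℝ, S u = ∑ n ∈ Finset.Icc 1 N,
      a n * Complex.exp (2 * Real.pi * Complex.I * n * u))
    (hS' : ∀ u : ℝ, S' u = 2 * Real.pi * Complex.I * ∑ n ∈ Finset.Icc 1 N,
      n * a n * Complex.exp (2 * Real.pi * Complex.I * n * u))
    (α δ : ℝ) (hδ : 0 < δ) :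
    ‖S α‖ ^ 2 ≥
      (1 / δ) * (∫ u in (α - δ/2)..(α + δ/2), ‖S u‖ ^ 2)
        - ∫ u in (α - δ/2)..(α + δ/2), ‖S u * S' u‖ := by
  -- derivative of S is S'
  have hderiv : ∀ t : ℝ, HasDerivAt S (S' t) t := by
    intro t
    have hfun : S = fun u : ℝ => ∑ n ∈ Finset.Icc 1 N,
        a n * Complex.exp (2 * Real.pi * Complex.I * n * u) := funext hS
    have h1 : HasDerivAt (fun u : ℝ => ∑ n ∈ Finset.Icc 1 N,
        a n * Complex.exp (2 * Real.pi * Complex.I * n * u))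
        (∑ n ∈ Finset.Icc 1 N,
          a n * (Complex.exp (2 * Real.pi * Complex.I * n * t) * (2 * Real.pi * Complex.I * n))) t := by
      apply HasDerivAt.fun_sum
      intro n _
      have h2 : HasDerivAt (fun u : ℝ => 2 * Real.pi * Complex.I * n * (u : ℂ))
          (2 * Real.pi * Complex.I * n) t := by
        simpa using (Complex.ofRealCLM.hasDerivAt (x := t)).const_mul (2 * Real.pi * Complex.I * n)
      have h3 := h2.cexp
      simpa [mul_comm, mul_assoc, mul_left_comm] using (h3.const_mul (a n))
    have heq : S' t = ∑ n ∈ Finset.Icc 1 N,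
        a n * (Complex.exp (2 * Real.pi * Complex.I * n * t) * (2 * Real.pi * Complex.I * n)) := by
      rw [hS', Finset.mul_sum]
      exact Finset.sum_congr rfl (fun n _ => by ring)
    rw [heq, hfun]
    exact h1
  have hScont : Continuous S := by
    have : Differentiable ℝ S := fun t => (hderiv t).differentiableAt
    exact this.continuous
  have hS'cont : Continuous S' := by
    rw [funext hS']
    continuity
  -- derivative of F = |S|^2
  set g : ℝ → ℝ := fun t => 2 * ((starRingEnd ℂ) (S t) * S' t).re with hg
  have hF : ∀ t : ℝ, HasDerivAt (fun t => ‖S t‖ ^ 2) (g t) t := by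
    intro t
    have hre : HasDerivAt (fun t => (S t).re) ((S' t).re) t :=
      (Complex.reCLM.hasFDerivAt.comp_hasDerivAt t (hderiv t))
    have him : HasDerivAt (fun t => (S t).im) ((S' t).im) t :=
      (Complex.imCLM.hasFDerivAt.comp_hasDerivAt t (hderiv t))
    have h4 : HasDerivAt (fun t => (S t).re ^ 2 + (S t).im ^ 2)
        (2 * (S t).re * (S' t).re + 2 * (S t).im * (S' t).im) t := by
      have := ((hre.fun_pow 2).fun_add (him.fun_pow 2))
      simpa [mul_comm, mul_assoc, mul_left_comm] using this
    have heq2 : (fun t => ‖S t‖ ^ 2) = fun t => (S t).re ^ 2 + (S t).im ^ 2 := by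
      funext t
      rw [Complex.sq_norm, Complex.normSq_apply]; ring
    rw [heq2]
    convert h4 using 1
    simp [hg, Complex.mul_re]
    ring
  have hgcont : Continuous g := by
    apply Continuous.mul continuous_const
    exact Complex.continuous_re.comp ((Complex.continuous_conj.comp hScont).mul hS'cont)
  set F : ℝ → ℝ := fun t => ‖S t‖ ^ 2 with hFdef
  have hFcont : Continuous F := by
    apply Continuous.pow
    exact continuous_norm.comp hScont
  set h : ℝ → ℝ := fun t => 2 * ‖S t * S' t‖ with hh
  have hhcont : Continuous h :=
    Continuous.mul continuous_const (continuous_norm.comp (hScont.mul hS'cont))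
  have hgh : ∀ t, |g t| ≤ h t := by
    intro t
    rw [hg, hh]
    simp only [abs_mul, abs_two]
    gcongr
    calc |((starRingEnd ℂ) (S t) * S' t).re| ≤ ‖(starRingEnd ℂ) (S t) * S' t‖ :=
          Complex.abs_re_le_norm _
      _ = ‖S t * S' t‖ := by rw [norm_mul, norm_mul, Complex.norm_conj]
  have hFTC : ∀ x y : ℝ, (∫ t in x..y, g t) = F y - F x := fun x y =>
    integral_eq_sub_of_hasDerivAt (fun t _ => hF t) (hgcont.intervalIntegrable x y)
  set M := ∫ u in (α - δ/2)..(α + δ/2), ‖S u * S' u‖ with hM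
  set Hl := ∫ t in (α - δ/2)..α, h t with hHl
  set Hr := ∫ t in α..(α + δ/2), h t with hHr
  have hd2 : (0:ℝ) < δ/2 := by linarith
  -- pointwise bound on right interval
  have hright : ∀ u ∈ Set.Icc α (α + δ/2), F u ≤ F α + Hr := by
    intro u hu
    have h1 : F u - F α = ∫ t in α..u, g t := (hFTC α u).symm
    have h2 : (∫ t in α..u, g t) ≤ ∫ t in α..u, h t :=
      integral_mono_on hu.1 (hgcont.intervalIntegrable _ _) (hhcont.intervalIntegrable _ _)
        (fun t _ => (le_abs_self _).trans (hgh t))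
    have h3 : (∫ t in α..u, h t) ≤ Hr :=
      integral_mono_interval le_rfl hu.1 hu.2
        (Filter.Eventually.of_forall fun t => by positivity)
        (hhcont.intervalIntegrable _ _)
    linarith
  have hleft : ∀ u ∈ Set.Icc (α - δ/2) α, F u ≤ F α + Hl := by
    intro u hu
    have h1 : F α - F u = ∫ t in u..α, g t := (hFTC u α).symm
    have h2 : (∫ t in u..α, (-h) t) ≤ ∫ t in u..α, g t :=
      integral_mono_on hu.2 ((hhcont.neg).intervalIntegrable _ _) (hgcont.intervalIntegrable _ _)
        (fun t _ => neg_le_of_abs_le (hgh t))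
    have h2' : (∫ t in u..α, (-h) t) = -(∫ t in u..α, h t) := by
      simp [intervalIntegral.integral_neg]
    have h3 : (∫ t in u..α, h t) ≤ Hl :=
      integral_mono_interval hu.1 hu.2 le_rfl
        (Filter.Eventually.of_forall fun t => by positivity)
        (hhcont.intervalIntegrable _ _)
    linarith
  -- integrate
  have hIr : (∫ u in α..(α + δ/2), F u) ≤ (δ/2) * (F α + Hr) := by
    have := integral_mono_on (by linarith : α ≤ α + δ/2) (hFcont.intervalIntegrable _ _)
      (intervalIntegrable_const (μ := volume)) hright
    simpa [smul_eq_mul] using this.trans_eq (by rw [intervalIntegral.integral_const, smul_eq_mul]; ring)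
  have hIl : (∫ u in (α - δ/2)..α, F u) ≤ (δ/2) * (F α + Hl) := by
    have := integral_mono_on (by linarith : α - δ/2 ≤ α) (hFcont.intervalIntegrable _ _)
      (intervalIntegrable_const (μ := volume)) hleft
    simpa [smul_eq_mul] using this.trans_eq (by rw [intervalIntegral.integral_const, smul_eq_mul]; ring)
  have hsplitF : (∫ u in (α - δ/2)..α, F u) + (∫ u in α..(α + δ/2), F u)
      = ∫ u in (α - δ/2)..(α + δ/2), F u :=
    integral_add_adjacent_intervals (hFcont.intervalIntegrable _ _) (hFcont.intervalIntegrable _ _)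
  have hsplith : Hl + Hr = ∫ t in (α - δ/2)..(α + δ/2), h t :=
    integral_add_adjacent_intervals (hhcont.intervalIntegrable _ _) (hhcont.intervalIntegrable _ _)
  have hhM : (∫ t in (α - δ/2)..(α + δ/2), h t) = 2 * M := by
    rw [hM, hh]
    rw [← intervalIntegral.integral_const_mul]
  have hL : (∫ u in (α - δ/2)..(α + δ/2), F u) ≤ δ * F α + δ * M := by
    have : Hl + Hr = 2 * M := hsplith.trans hhM
    nlinarith [hIl, hIr, hsplitF]
  have hfinal : (1/δ) * (∫ u in (α - δ/2)..(α + δ/2), F u) ≤ F α + M := by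
    have h5 := mul_le_mul_of_nonneg_left hL (le_of_lt (one_div_pos.mpr hδ))
    calc (1/δ) * (∫ u in (α - δ/2)..(α + δ/2), F u) ≤ (1/δ) * (δ * F α + δ * M) := h5
      _ = F α + M := by field_simp
  show F α ≥ (1/δ) * (∫ u in (α - δ/2)..(α + δ/2), F u) - M
  linarith
end

section
/- Let Q ≥ 1 and A > 1 with A/Q² < 1/2, and define m(Q,A) = { u ∈ [0,1] : there is no pair (a,q) with 1 ≤ q ≤ Q, gcd(a,q) = 1, and |u − a/q| ≤ A/Q² }. Then the Lebesgue measure of m(Q,A) is at most 1/A. -/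
open MeasureTheory Finset

lemma aux_gauss (N : ℕ) : ∑ q ∈ Finset.Icc 1 N, (q:ℝ) = N*(N+1)/2 := by
  induction N with
  | zero => simp
  | succ n ih =>
    rw [Finset.sum_Icc_succ_top (by omega), ih]
    push_cast; ring

lemma aux_ifsum (c : ℝ) {q : ℕ} (hq : 1 ≤ q) :
    ∑ a ∈ Finset.range (q+1), (if a = 0 ∨ a = q then c else 2*c) = 2*q*c := by
  obtain ⟨m, rfl⟩ : ∃ m, q = m + 1 := ⟨q - 1, by omega⟩
  rw [Finset.sum_range_succ, Finset.sum_range_succ']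
  have h1 : ∑ a ∈ Finset.range m, (if a + 1 = 0 ∨ a + 1 = m + 1 then c else 2*c)
      = ∑ a ∈ Finset.range m, (2*c) := by
    apply Finset.sum_congr rfl
    intro a ha
    have h' : a < m := Finset.mem_range.mp ha
    have : ¬(a + 1 = 0 ∨ a + 1 = m + 1) := by omega
    rw [if_neg this]
  rw [h1]
  simp
  ring

set_option maxHeartbeats 2000000 in
/-- The set of points of `[0,1]` at distance greater than `A/Q²` from every
reduced fraction with denominator at most `Q` has Lebesgue measure at most `1/A`. -/
theorem measure_far_from_fractions (Q A : ℝ) (hQ : 1 ≤ Q) (hA : 1 < A)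
    (hAQ : A / Q ^ 2 < 1 / 2) :
    volume {u : ℝ | u ∈ Set.Icc (0:ℝ) 1 ∧
        ¬ ∃ a q : ℤ, 1 ≤ q ∧ (q : ℝ) ≤ Q ∧ Int.gcd a q = 1 ∧
          |u - (a : ℝ) / q| ≤ A / Q ^ 2} ≤ ENNReal.ofReal (1 / A) := by
  have hQ0 : (0:ℝ) < Q := by linarith
  have hA0 : (0:ℝ) < A := by linarith
  set s : ℝ := A / Q ^ 2 with hs
  have hs0 : 0 < s := by positivity
  set N : ℕ := ⌊Q / A⌋₊ with hNdef
  have hNle : (N : ℝ) ≤ Q / A := Nat.floor_le (by positivity)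
  have hNA : A * N ≤ Q := by
    rw [mul_comm]
    calc (N:ℝ) * A ≤ (Q / A) * A := by nlinarith
    _ = Q := by field_simp
  set r : ℕ → ℝ := fun q => 1 / (q * Q) with hrdef
  set I : ℕ → ℕ → Set ℝ := fun q a =>
    (Set.Icc ((a:ℝ)/q - r q) ((a:ℝ)/q - s) ∪ Set.Icc ((a:ℝ)/q + s) ((a:ℝ)/q + r q))
      ∩ Set.Icc 0 1 with hIdef
  set B : ℕ → ℕ → ℝ := fun q a => if a = 0 ∨ a = q then (r q - s) else 2*(r q - s)
    with hBdef
  set T : Finset ((_ : ℕ) × ℕ) := (Finset.Icc 1 N).sigma (fun q => Finset.range (q+1))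
    with hTdef
  -- q ∈ Icc 1 N implies s ≤ r q
  have hrs : ∀ q : ℕ, q ∈ Finset.Icc 1 N → s ≤ r q := by
    intro q hq
    obtain ⟨hq1, hqN⟩ := Finset.mem_Icc.mp hq
    have hq1' : (1:ℝ) ≤ q := by exact_mod_cast hq1
    have hqQ : (q:ℝ) * A ≤ Q := by
      have : (q:ℝ) ≤ (N:ℝ) := by exact_mod_cast hqN
      nlinarith
    rw [hs, hrdef]
    rw [div_le_div_iff₀ (by positivity) (by positivity)]
    nlinarith
  -- membership helper
  have memI : ∀ (q a : ℕ) (u : ℝ), u ∈ Set.Icc (0:ℝ) 1 →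
      s < |u - (a:ℝ)/q| → |u - (a:ℝ)/q| ≤ r q → u ∈ I q a := by
    intro q a u hu h1 h2
    refine ⟨?_, hu⟩
    rcases le_or_gt u ((a:ℝ)/q) with h | h
    · left
      rw [abs_sub_comm, abs_of_nonneg (by linarith)] at h1 h2
      constructor <;> linarith
    · right
      rw [abs_of_pos (by linarith)] at h1 h2
      constructor <;> linarith
  -- index helper : s < r q gives q ≤ N
  have hqmem : ∀ q : ℕ, 1 ≤ q → s < r q → q ∈ Finset.Icc 1 N := by
    intro q hq1 hsr
    refine Finset.mem_Icc.mpr ⟨hq1, ?_⟩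
    have hq1' : (1:ℝ) ≤ q := by exact_mod_cast hq1
    rw [hs, hrdef, div_lt_div_iff₀ (by positivity) (by positivity)] at hsr
    have : (q:ℝ) ≤ Q / A := by
      rw [le_div_iff₀ hA0]; nlinarith
    exact Nat.le_floor this
  -- the covering
  have hsub : {u : ℝ | u ∈ Set.Icc (0:ℝ) 1 ∧
        ¬ ∃ a q : ℤ, 1 ≤ q ∧ (q : ℝ) ≤ Q ∧ Int.gcd a q = 1 ∧
          |u - (a : ℝ) / q| ≤ s} ⊆ ⋃ p ∈ T, I p.1 p.2 := by
    intro u hu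
    obtain ⟨hu01, hfar'⟩ := hu
    push_neg at hfar'
    have hfar : ∀ a q : ℤ, 1 ≤ q → (q:ℝ) ≤ Q → Int.gcd a q = 1 →
        s < |u - (a:ℝ)/q| := by
      intro a q h1 h2 h3
      exact hfar' a q h1 h2 h3
    -- Dirichlet
    have hn0 : 0 < ⌊Q⌋₊ := Nat.floor_pos.mpr hQ
    obtain ⟨j, k, hk0, hkn, hjk⟩ := Real.exists_int_int_abs_mul_sub_le u hn0
    have hkR : (0:ℝ) < (k:ℝ) := by exact_mod_cast hk0
    have hQn : Q < (⌊Q⌋₊ : ℝ) + 1 := Nat.lt_floor_add_one Q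
    have hkQ : (k:ℝ) ≤ Q := by
      have : (k:ℝ) ≤ (⌊Q⌋₊:ℝ) := by exact_mod_cast hkn
      have := Nat.floor_le (le_of_lt hQ0)
      linarith
    have hujk : |u - (j:ℝ)/k| ≤ 1 / ((k:ℝ) * Q) := by
      have key : ((k:ℝ)*u - j) = k * (u - j/k) := by field_simp
      have habs : (k:ℝ) * |u - (j:ℝ)/k| = |(k:ℝ)*u - j| := by
        rw [key, abs_mul, abs_of_pos hkR]
      have hjk' : (k:ℝ) * |u - (j:ℝ)/k| ≤ 1 / ((⌊Q⌋₊:ℝ)+1) := habs ▸ hjk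
      have hn1 : (0:ℝ) < (⌊Q⌋₊:ℝ)+1 := by positivity
      have hrec : (1/((⌊Q⌋₊:ℝ)+1)) * ((⌊Q⌋₊:ℝ)+1) = 1 := by field_simp
      rw [le_div_iff₀ (by positivity)]
      nlinarith [abs_nonneg (u - (j:ℝ)/k), one_div_nonneg.mpr (le_of_lt hn1)]
    -- reduce the fraction
    set g : ℕ := Int.gcd j k with hgdef
    have hg0 : 0 < g := Int.gcd_pos_of_ne_zero_right j (by omega)
    set a1 : ℤ := j / g with ha1def
    set q1 : ℤ := k / g with hq1def
    have hja : (g:ℤ) * a1 = j := Int.mul_ediv_cancel' (Int.gcd_dvd_left j k)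
    have hkq : (g:ℤ) * q1 = k := Int.mul_ediv_cancel' (Int.gcd_dvd_right j k)
    have hgcd1 : Int.gcd a1 q1 = 1 := by
      rw [ha1def, hq1def]
      exact Int.gcd_div_gcd_div_gcd (by exact_mod_cast hg0)
    have hq1pos : 0 < q1 := by
      rcases lt_trichotomy q1 0 with h | h | h
      · exfalso; nlinarith [hk0, hkq, (by exact_mod_cast hg0 : (0:ℤ) < g)]
      · exfalso; rw [← hkq, h, mul_zero] at hk0; exact lt_irrefl 0 hk0
      · exact h
    have hq1k : q1 ≤ k := by
      nlinarith [(by exact_mod_cast hg0 : (1:ℤ) ≤ g), hq1pos]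
    have hq1R : (0:ℝ) < (q1:ℝ) := by exact_mod_cast hq1pos
    have hq1Q : (q1:ℝ) ≤ Q := le_trans (by exact_mod_cast hq1k) hkQ
    have hfrac : (j:ℝ)/k = (a1:ℝ)/q1 := by
      rw [← hja, ← hkq]
      push_cast
      rw [mul_div_mul_left _ _ (Nat.cast_ne_zero.mpr hg0.ne' : (g:ℝ) ≠ 0)]
    have hnear : |u - (a1:ℝ)/q1| ≤ 1 / ((q1:ℝ) * Q) := by
      rw [← hfrac]
      refine le_trans hujk ?_
      apply one_div_le_one_div_of_le (mul_pos hq1R hQ0)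
      have h' : (q1:ℝ) ≤ (k:ℝ) := by exact_mod_cast hq1k
      exact mul_le_mul_of_nonneg_right h' (le_of_lt hQ0)
    have hfar1 : s < |u - (a1:ℝ)/q1| := hfar a1 q1 hq1pos hq1Q hgcd1
    obtain ⟨hu0, hu1⟩ := hu01
    -- case split on a1
    by_cases hc1 : a1 < 0
    · -- a1 < 0 : use (q,a) = (1,0)
      have hneg : (a1:ℝ)/q1 < 0 := div_neg_of_neg_of_pos (by exact_mod_cast hc1) hq1R
      have huu : |u - ((0:ℕ):ℝ)/((1:ℕ):ℝ)| = u := by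
        simp [abs_of_nonneg hu0]
      have hfar0 : s < u := by
        have := hfar 0 1 le_rfl (by exact_mod_cast hQ) (by simp)
        simpa [abs_of_nonneg hu0] using this
      have hle : u ≤ r 1 := by
        have h1 : u ≤ |u - (a1:ℝ)/q1| := by
          rw [abs_of_pos (by linarith : (0:ℝ) < u - (a1:ℝ)/q1)]
          linarith
        have hq1R1 : (1:ℝ) ≤ (q1:ℝ) := by exact_mod_cast hq1pos
        have h2 : 1 / ((q1:ℝ)*Q) ≤ 1/(1*Q) :=
          one_div_le_one_div_of_le (by linarith)
            (mul_le_mul_of_nonneg_right hq1R1 hQ0.le)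
        simp only [hrdef, Nat.cast_one]
        linarith
      have h1N : (1:ℕ) ∈ Finset.Icc 1 N :=
        hqmem 1 le_rfl (lt_of_lt_of_le hfar0 hle)
      refine Set.mem_biUnion (show (⟨1, 0⟩ : (_ : ℕ) × ℕ) ∈ T from ?_) ?_
      · exact Finset.mem_sigma.mpr ⟨h1N, by simp⟩
      · exact memI 1 0 u ⟨hu0, hu1⟩ (by rw [huu]; exact hfar0) (by rw [huu]; exact hle)
    · by_cases hc2 : q1 < a1
      · -- a1 > q1 : use (q,a) = (1,1)
        have hone : ((1:ℕ):ℝ)/((1:ℕ):ℝ) = 1 := by norm_num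
        have hgt : (1:ℝ) < (a1:ℝ)/q1 := by
          rw [lt_div_iff₀ hq1R, one_mul]
          exact_mod_cast hc2
        have huu : |u - ((1:ℕ):ℝ)/((1:ℕ):ℝ)| = 1 - u := by
          rw [hone, abs_of_nonpos (by linarith : u - 1 ≤ 0), neg_sub]
        have hfar0 : s < 1 - u := by
          have h := hfar 1 1 le_rfl (by exact_mod_cast hQ) (by simp)
          rw [show ((1:ℤ):ℝ)/((1:ℤ):ℝ) = 1 by norm_num,
            abs_of_nonpos (by linarith : u - 1 ≤ 0), neg_sub] at h
          exact h
        have hle : 1 - u ≤ r 1 := by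
          have h1 : 1 - u ≤ |u - (a1:ℝ)/q1| := by
            rw [abs_of_nonpos (by linarith : u - (a1:ℝ)/q1 ≤ 0), neg_sub]
            linarith
          have hq1R1 : (1:ℝ) ≤ (q1:ℝ) := by exact_mod_cast hq1pos
          have h2 : 1 / ((q1:ℝ)*Q) ≤ 1/(1*Q) :=
            one_div_le_one_div_of_le (by linarith)
              (mul_le_mul_of_nonneg_right hq1R1 hQ0.le)
          simp only [hrdef, Nat.cast_one]
          linarith
        have h1N : (1:ℕ) ∈ Finset.Icc 1 N :=
          hqmem 1 le_rfl (lt_of_lt_of_le hfar0 hle)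
        refine Set.mem_biUnion (show (⟨1, 1⟩ : (_ : ℕ) × ℕ) ∈ T from ?_) ?_
        · exact Finset.mem_sigma.mpr ⟨h1N, by simp⟩
        · exact memI 1 1 u ⟨hu0, hu1⟩ (by rw [huu]; exact hfar0) (by rw [huu]; exact hle)
      · -- 0 ≤ a1 ≤ q1
        have ha0 : 0 ≤ a1 := not_lt.mp hc1
        have haq : a1 ≤ q1 := not_lt.mp hc2
        have e1 : ((a1.toNat : ℕ) : ℝ) = (a1:ℝ) := by
          exact_mod_cast congrArg (fun z : ℤ => (z:ℝ)) (Int.toNat_of_nonneg ha0)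
        have e2 : ((q1.toNat : ℕ) : ℝ) = (q1:ℝ) := by
          exact_mod_cast congrArg (fun z : ℤ => (z:ℝ)) (Int.toNat_of_nonneg hq1pos.le)
        have hq1nat : 1 ≤ q1.toNat := Int.toNat_le_toNat (by linarith : (1:ℤ) ≤ q1)
        have hrq : r q1.toNat = 1 / ((q1:ℝ) * Q) := by
          simp only [hrdef, e2]
        have hfar2 : s < |u - ((q1.toNat:ℕ) : ℝ)⁻¹ * ((a1.toNat:ℕ):ℝ)| := by
          rw [show ((q1.toNat:ℕ) : ℝ)⁻¹ * ((a1.toNat:ℕ):ℝ)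
            = ((a1.toNat:ℕ):ℝ) / ((q1.toNat:ℕ):ℝ) by ring, e1, e2]
          exact hfar1
        have hqN : q1.toNat ∈ Finset.Icc 1 N := by
          apply hqmem q1.toNat hq1nat
          rw [hrdef]
          simp only [e2]
          exact lt_of_lt_of_le hfar1 hnear
        refine Set.mem_biUnion
          (show (⟨q1.toNat, a1.toNat⟩ : (_ : ℕ) × ℕ) ∈ T from ?_) ?_
        · refine Finset.mem_sigma.mpr ⟨hqN, Finset.mem_range.mpr (Nat.lt_succ_iff.mpr (Int.toNat_le_toNat haq))⟩
        · refine memI q1.toNat a1.toNat u ⟨hu0, hu1⟩ ?_ ?_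
          · rw [show ((a1.toNat:ℕ):ℝ)/((q1.toNat:ℕ):ℝ) = (a1:ℝ)/(q1:ℝ) by
              rw [e1, e2]]
            exact hfar1
          · rw [show ((a1.toNat:ℕ):ℝ)/((q1.toNat:ℕ):ℝ) = (a1:ℝ)/(q1:ℝ) by
              rw [e1, e2], hrq]
            exact hnear
  -- volume bounds
  have hvol : ∀ p ∈ T, volume (I p.1 p.2) ≤ ENNReal.ofReal (B p.1 p.2) := by
    rintro ⟨q, a⟩ hp
    obtain ⟨hq, ha⟩ := Finset.mem_sigma.mp hp
    obtain ⟨hq1, hqN⟩ := Finset.mem_Icc.mp hq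
    have ha' : a ≤ q := Nat.lt_succ_iff.mp (Finset.mem_range.mp ha)
    have hsr := hrs q hq
    have hq0R : (0:ℝ) < q := by exact_mod_cast hq1
    by_cases h0 : a = 0 ∨ a = q
    · simp only [hBdef, if_pos h0]
      rcases h0 with h0 | h0
      · subst h0
        have hI : I q 0 ⊆ Set.Icc s (r q) := by
          rintro x ⟨hx1, hx2⟩
          have hc : ((0:ℕ):ℝ)/(q:ℝ) = 0 := by norm_num
          rcases hx1 with hx | hx
          · exfalso
            rw [hc] at hx
            have h1 := hx.2
            have h2 := hx2.1
            linarith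
          · rw [hc] at hx
            simpa using hx
        calc volume (I q 0) ≤ volume (Set.Icc s (r q)) := measure_mono hI
          _ = ENNReal.ofReal (r q - s) := Real.volume_Icc
      · subst h0
        have hcq : ((a:ℕ):ℝ)/(a:ℝ) = 1 := div_self (ne_of_gt hq0R)
        have hI : I a a ⊆ Set.Icc (1 - r a) (1 - s) := by
          rintro x ⟨hx1, hx2⟩
          rcases hx1 with hx | hx
          · rw [hcq] at hx
            exact ⟨hx.1, hx.2⟩
          · exfalso
            rw [hcq] at hx
            have h1 := hx.1
            have h2 := hx2.2
            linarith
        calc volume (I a a) ≤ volume (Set.Icc (1 - r a) (1 - s)) := measure_mono hI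
          _ = ENNReal.ofReal (r a - s) := by
              rw [Real.volume_Icc]
              congr 1
              ring
    · simp only [hBdef, if_neg h0]
      calc volume (I q a)
          ≤ volume (Set.Icc ((a:ℝ)/q - r q) ((a:ℝ)/q - s)
              ∪ Set.Icc ((a:ℝ)/q + s) ((a:ℝ)/q + r q)) :=
            measure_mono Set.inter_subset_left
        _ ≤ volume (Set.Icc ((a:ℝ)/q - r q) ((a:ℝ)/q - s))
            + volume (Set.Icc ((a:ℝ)/q + s) ((a:ℝ)/q + r q)) := measure_union_le _ _
        _ = ENNReal.ofReal (r q - s) + ENNReal.ofReal (r q - s) := by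
            rw [Real.volume_Icc, Real.volume_Icc]
            congr 1 <;> · congr 1; ring
        _ = ENNReal.ofReal (2*(r q - s)) := by
            rw [← ENNReal.ofReal_add (by linarith) (by linarith)]
            congr 1
            ring
  -- nonnegativity of B
  have hBpos : ∀ p ∈ T, 0 ≤ B p.1 p.2 := by
    rintro ⟨q, a⟩ hp
    obtain ⟨hq, _⟩ := Finset.mem_sigma.mp hp
    have hsr := hrs q hq
    simp only [hBdef]
    split <;> linarith
  -- the final real sum bound
  have hfinal : ∑ p ∈ T, B p.1 p.2 ≤ 1/A := by
    rw [hTdef, Finset.sum_sigma]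
    have hinner : ∀ q ∈ Finset.Icc 1 N,
        ∑ a ∈ Finset.range (q+1), B q a = 2/Q - 2*s*q := by
      intro q hq
      obtain ⟨hq1, _⟩ := Finset.mem_Icc.mp hq
      have hq0R : (0:ℝ) < ((q:ℕ):ℝ) := by exact_mod_cast hq1
      rw [show (∑ a ∈ Finset.range (q+1), B q a) = 2*(q:ℝ)*(r q - s) from
        aux_ifsum (r q - s) hq1]
      simp only [hrdef]
      field_simp
    rw [Finset.sum_congr rfl hinner]
    have hsum : ∑ q ∈ Finset.Icc 1 N, (2/Q - 2*s*(q:ℝ))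
        = (N:ℝ)*(2/Q) - 2*s*((N:ℝ)*((N:ℝ)+1)/2) := by
      rw [Finset.sum_sub_distrib, Finset.sum_const, Nat.card_Icc, ← Finset.mul_sum,
        aux_gauss]
      simp only [Nat.add_sub_cancel, nsmul_eq_mul]
    rw [hsum, hs]
    have hn0 : (0:ℝ) ≤ (N:ℝ) := Nat.cast_nonneg N
    have key : ((N:ℝ)*(2/Q) - 2*(A/Q^2)*((N:ℝ)*((N:ℝ)+1)/2))
        = (2*(N:ℝ)*Q - A*((N:ℝ)*((N:ℝ)+1))) / Q^2 := by
      field_simp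
    rw [key, div_le_div_iff₀ (by positivity) hA0]
    nlinarith [sq_nonneg (Q - A*(N:ℝ)), mul_nonneg (mul_nonneg hA0.le hA0.le) hn0]
  calc volume {u : ℝ | u ∈ Set.Icc (0:ℝ) 1 ∧
        ¬ ∃ a q : ℤ, 1 ≤ q ∧ (q : ℝ) ≤ Q ∧ Int.gcd a q = 1 ∧
          |u - (a : ℝ) / q| ≤ s}
      ≤ volume (⋃ p ∈ T, I p.1 p.2) := measure_mono hsub
    _ ≤ ∑ p ∈ T, volume (I p.1 p.2) := measure_biUnion_finset_le T _
    _ ≤ ∑ p ∈ T, ENNReal.ofReal (B p.1 p.2) := Finset.sum_le_sum hvol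
    _ = ENNReal.ofReal (∑ p ∈ T, B p.1 p.2) := (ENNReal.ofReal_sum_of_nonneg hBpos).symm
    _ ≤ ENNReal.ofReal (1/A) := ENNReal.ofReal_le_ofReal hfinal
end

section
/- Let a_1,…,a_N be independent random variables, each uniform on {1,−1}, let S(α) = Σ_{n=1}^N a_n e(nα), and let 0 < x ≤ 1. Then with probability at least 1 − √(8x), every Lebesgue-measurable set 𝔪 ⊆ [0,1] of measure x satisfies ∫_𝔪 |S(u)|² du ≤ (1/2)·∫_0^1 |S(u)|² du. -/
open MeasureTheory ProbabilityTheory Real Complex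

noncomputable def EE (k : ℤ) (u : ℝ) : ℂ := Complex.exp (2 * Real.pi * Complex.I * k * u)

lemma EE_cont (k : ℤ) : Continuous (EE k) := by
  unfold EE; fun_prop

lemma EE_mul (j k : ℤ) (u : ℝ) : EE j u * EE k u = EE (j + k) u := by
  unfold EE
  rw [← Complex.exp_add]
  push_cast
  ring_nf

lemma EE_conj (k : ℤ) (u : ℝ) : (starRingEnd ℂ) (EE k u) = EE (-k) u := by
  unfold EE
  rw [← Complex.exp_conj]
  push_cast
  simp [map_mul, Complex.conj_I, Complex.conj_ofReal, map_ofNat]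

lemma EE_integral (k : ℤ) : (∫ u in (0:ℝ)..1, EE k u) = if k = 0 then 1 else 0 := by
  rcases eq_or_ne k 0 with hk | hk
  · simp [hk, EE]
  · rw [if_neg hk]
    have hc : (2 * (Real.pi:ℂ) * Complex.I * k) ≠ 0 := by
      simp [Real.pi_ne_zero, Complex.I_ne_zero, hk, Complex.ofReal_ne_zero]
    have h1 : ∀ u : ℝ, EE k u = Complex.exp ((2 * (Real.pi:ℂ) * Complex.I * k) * u) := by
      intro u; unfold EE; norm_cast
    simp_rw [h1]
    rw [integral_exp_mul_complex hc]
    have : Complex.exp (2 * (Real.pi:ℂ) * Complex.I * k * 1) = 1 := by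
      rw [show (2 * (Real.pi:ℂ) * Complex.I * k * 1) = k * (2 * Real.pi * Complex.I) by ring]
      exact Complex.exp_int_mul_two_pi_mul_I k
    push_cast
    rw [this]
    simp

lemma integral_sum_EE {ι : Type*} (s : Finset ι) (c : ι → ℂ) (k : ι → ℤ) :
    (∫ u in (0:ℝ)..1, ∑ i ∈ s, c i * EE (k i) u)
      = ∑ i ∈ s, c i * (if k i = 0 then 1 else 0) := by
  rw [intervalIntegral.integral_finset_sum]
  · exact Finset.sum_congr rfl fun i _ => by
      rw [intervalIntegral.integral_const_mul, EE_integral]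
  · exact fun i _ => (continuous_const.mul (EE_cont (k i))).intervalIntegrable _ _

variable {N : ℕ}

noncomputable def SS (b : Fin N → ℝ) (u : ℝ) : ℂ :=
  ∑ n : Fin N, (b n : ℂ) * Complex.exp (2 * Real.pi * Complex.I * ((n:ℕ) + 1) * u)

lemma SS_eq (b : Fin N → ℝ) (u : ℝ) :
    SS b u = ∑ n : Fin N, (b n : ℂ) * EE (((n:ℕ):ℤ) + 1) u := by
  unfold SS EE
  refine Finset.sum_congr rfl fun n _ => ?_
  push_cast
  ring_nf

lemma SS_mul_conj (b : Fin N → ℝ) (u : ℝ) :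
    SS b u * (starRingEnd ℂ) (SS b u)
      = ∑ m : Fin N, ∑ n : Fin N, ((b m * b n : ℝ) : ℂ) * EE (((m:ℕ):ℤ) - ((n:ℕ):ℤ)) u := by
  rw [SS_eq, map_sum, Finset.sum_mul_sum]
  refine Finset.sum_congr rfl fun m _ => Finset.sum_congr rfl fun n _ => ?_
  rw [map_mul, EE_conj, Complex.conj_ofReal, mul_mul_mul_comm, EE_mul,
    show (((m:ℕ):ℤ) + 1) + (-(((n:ℕ):ℤ) + 1)) = ((m:ℕ):ℤ) - ((n:ℕ):ℤ) by ring]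
  push_cast
  ring

lemma integral_SS_sq (b : Fin N → ℝ) :
    (∫ u in (0:ℝ)..1, (Complex.normSq (SS b u) : ℝ)) = ∑ n : Fin N, (b n)^2 := by
  have key : (∫ u in (0:ℝ)..1, ((Complex.normSq (SS b u) : ℝ) : ℂ))
      = ((∑ n : Fin N, (b n)^2 : ℝ) : ℂ) := by
    have h1 : ∀ u : ℝ, ((Complex.normSq (SS b u) : ℝ) : ℂ)
        = ∑ i ∈ (Finset.univ : Finset (Fin N × Fin N)),
            ((b i.1 * b i.2 : ℝ) : ℂ) * EE (((i.1:ℕ):ℤ) - ((i.2:ℕ):ℤ)) u := by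
      intro u
      rw [← Complex.mul_conj, SS_mul_conj, ← Finset.univ_product_univ, Finset.sum_product]
    simp_rw [h1]
    rw [integral_sum_EE]
    rw [← Finset.univ_product_univ, Finset.sum_product]
    push_cast
    refine Finset.sum_congr rfl fun m _ => ?_
    rw [Finset.sum_eq_single m]
    · simp [pow_two]
    · intro n _ hn
      have : ¬ (((m:ℕ):ℤ) - ((n:ℕ):ℤ) = 0) := by
        simp only [sub_eq_zero]
        exact_mod_cast fun h => hn (Fin.ext (by exact_mod_cast h)).symm
      simp [this]
    · simp
  have := intervalIntegral.integral_ofReal (f := fun u => (Complex.normSq (SS b u) : ℝ))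
    (a := (0:ℝ)) (b := (1:ℝ)) (μ := volume)
  rw [this] at key
  exact_mod_cast key

lemma integral_SS_four (b : Fin N → ℝ) :
    (∫ u in (0:ℝ)..1, ((Complex.normSq (SS b u)) : ℝ)^2)
      = ∑ i : (Fin N × Fin N) × (Fin N × Fin N),
          (b i.1.1 * b i.1.2 * (b i.2.1 * b i.2.2)) *
          (if (((i.1.1:ℕ):ℤ) - ((i.1.2:ℕ):ℤ)) + ((((i.2.1:ℕ):ℤ)) - ((i.2.2:ℕ):ℤ)) = 0
            then 1 else 0) := by
  have key : (∫ u in (0:ℝ)..1, (((Complex.normSq (SS b u) : ℝ)^2 : ℝ) : ℂ))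
      = ((∑ i : (Fin N × Fin N) × (Fin N × Fin N),
          (b i.1.1 * b i.1.2 * (b i.2.1 * b i.2.2)) *
          (if (((i.1.1:ℕ):ℤ) - ((i.1.2:ℕ):ℤ)) + ((((i.2.1:ℕ):ℤ)) - ((i.2.2:ℕ):ℤ)) = 0
            then 1 else 0) : ℝ) : ℂ) := by
    have h1 : ∀ u : ℝ, (((Complex.normSq (SS b u) : ℝ)^2 : ℝ) : ℂ)
        = ∑ i ∈ (Finset.univ : Finset ((Fin N × Fin N) × (Fin N × Fin N))),
            ((b i.1.1 * b i.1.2 * (b i.2.1 * b i.2.2) : ℝ) : ℂ) *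
              EE ((((i.1.1:ℕ):ℤ) - ((i.1.2:ℕ):ℤ)) + ((((i.2.1:ℕ):ℤ)) - ((i.2.2:ℕ):ℤ))) u := by
      intro u
      have h2 : (((Complex.normSq (SS b u) : ℝ) : ℂ))^2
          = (SS b u * (starRingEnd ℂ) (SS b u))^2 := by
        rw [Complex.mul_conj]
      push_cast
      rw [h2, SS_mul_conj, ← Finset.univ_product_univ, ← Finset.sum_product' ]
      rw [pow_two, Finset.sum_mul_sum, ← Finset.univ_product_univ, ← Finset.sum_product']
      refine Finset.sum_congr rfl fun i _ => ?_
      rw [mul_mul_mul_comm, EE_mul]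
      push_cast
      ring
    simp_rw [h1]
    rw [integral_sum_EE]
    push_cast
    refine Finset.sum_congr rfl fun i _ => ?_
    split <;> simp
  have := intervalIntegral.integral_ofReal (f := fun u => (Complex.normSq (SS b u) : ℝ)^2)
    (a := (0:ℝ)) (b := (1:ℝ)) (μ := volume)
  rw [this] at key
  exact_mod_cast key

section Prob
variable {N : ℕ} {Ω : Type*} [MeasureSpace Ω] [IsProbabilityMeasure (ℙ : Measure Ω)]
  {a : Fin N → Ω → ℝ} (hmeas : ∀ n, Measurable (a n))
  (hdist : ∀ n, ℙ {ω | a n ω = 1} = 1/2 ∧ ℙ {ω | a n ω = -1} = 1/2)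

include hmeas hdist in
lemma sign_ae (n : Fin N) : ∀ᵐ ω ∂(ℙ : Measure Ω), a n ω = 1 ∨ a n ω = -1 := by
  have hA : MeasurableSet {ω | a n ω = 1} := (hmeas n) (measurableSet_singleton 1)
  have hB : MeasurableSet {ω | a n ω = -1} := (hmeas n) (measurableSet_singleton (-1))
  have hd : Disjoint {ω | a n ω = 1} {ω | a n ω = -1} := by
    rw [Set.disjoint_left]
    rintro ω h1 h2
    simp only [Set.mem_setOf_eq] at h1 h2
    linarith [h1, h2]
  have hu : ℙ ({ω | a n ω = 1} ∪ {ω | a n ω = -1}) = 1 := by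
    rw [measure_union hd hB, (hdist n).1, (hdist n).2]
    simpa using ENNReal.add_halves (1:ENNReal)
  have hc : ℙ ({ω | a n ω = 1} ∪ {ω | a n ω = -1})ᶜ = 0 := by
    rw [measure_compl (hA.union hB) (measure_ne_top _ _), hu, measure_univ, tsub_self]
  rw [MeasureTheory.ae_iff]
  have heq : {ω | ¬(a n ω = 1 ∨ a n ω = -1)} = ({ω | a n ω = 1} ∪ {ω | a n ω = -1})ᶜ := by
    ext ω; simp [not_or]
  rw [heq]
  exact hc

include hmeas hdist in
lemma integral_a (n : Fin N) : ∫ ω, a n ω ∂(ℙ : Measure Ω) = 0 := by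
  have hA : MeasurableSet {ω | a n ω = 1} := (hmeas n) (measurableSet_singleton 1)
  have hB : MeasurableSet {ω | a n ω = -1} := (hmeas n) (measurableSet_singleton (-1))
  have hcong : a n =ᵐ[ℙ] fun ω =>
      Set.indicator {ω | a n ω = 1} (fun _ => (1:ℝ)) ω
        + Set.indicator {ω | a n ω = -1} (fun _ => (-1:ℝ)) ω := by
    filter_upwards [sign_ae hmeas hdist n] with ω h
    rcases h with h | h <;>
      simp [Set.indicator_apply, Set.mem_setOf_eq, h] <;> norm_num
  rw [integral_congr_ae hcong, integral_add
    ((integrable_const (1:ℝ)).indicator hA) ((integrable_const (-1:ℝ)).indicator hB),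
    integral_indicator_const _ hA, integral_indicator_const _ hB, measureReal_def, measureReal_def, (hdist n).1, (hdist n).2]
  norm_num [ENNReal.toReal_div]

include hmeas hdist in
lemma integral_pow_a (n : Fin N) (k : ℕ) :
    ∫ ω, (a n ω)^k ∂(ℙ : Measure Ω) = if Even k then 1 else 0 := by
  rcases Nat.even_or_odd k with hk | hk
  · rw [if_pos hk]
    have : (fun ω => (a n ω)^k) =ᵐ[ℙ] fun _ => (1:ℝ) := by
      filter_upwards [sign_ae hmeas hdist n] with ω h
      rcases h with h | h <;> rw [h]
      · simp
      · exact hk.neg_one_pow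
    rw [integral_congr_ae this]
    simp
  · rw [if_neg (Nat.not_even_iff_odd.mpr hk)]
    have : (fun ω => (a n ω)^k) =ᵐ[ℙ] a n := by
      filter_upwards [sign_ae hmeas hdist n] with ω h
      rcases h with h | h <;> rw [h]
      · simp
      · simp [hk.neg_one_pow]
    rw [integral_congr_ae this]
    exact integral_a hmeas hdist n

include hmeas hdist in
lemma integrable_prod_pow (c : Fin N → ℕ) (s : Finset (Fin N)) :
    Integrable (fun ω => ∏ i ∈ s, (a i ω)^(c i)) (ℙ : Measure Ω) := by
  refine ⟨(Finset.measurable_prod s fun i _ => (hmeas i).pow_const (c i)).aestronglyMeasurable, ?_⟩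
  apply HasFiniteIntegral.of_bounded (C := 1)
  filter_upwards [ae_all_iff.2 (fun i => sign_ae hmeas hdist i)] with ω h
  rw [Real.norm_eq_abs, Finset.abs_prod]
  apply le_of_eq
  refine Finset.prod_eq_one fun i _ => ?_
  rw [_root_.abs_pow]
  rcases h i with hi | hi <;> rw [hi] <;> simp

variable (hindep : iIndepFun a (ℙ : Measure Ω))

include hmeas hdist hindep in
lemma integral_prod_pow (c : Fin N → ℕ) (s : Finset (Fin N)) :
    ∫ ω, ∏ i ∈ s, (a i ω)^(c i) ∂(ℙ : Measure Ω)
      = ∏ i ∈ s, ∫ ω, (a i ω)^(c i) ∂(ℙ : Measure Ω) := by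
  classical
  induction s using Finset.induction with
  | empty => simp
  | insert i s hi ih =>
    have hg : iIndepFun (fun i ω => (a i ω)^(c i)) (ℙ : Measure Ω) :=
      hindep.comp (fun i x => x ^ (c i)) (fun i => measurable_id.pow_const (c i))
    have hInd : IndepFun (fun ω => (a i ω)^(c i)) (fun ω => ∏ j ∈ s, (a j ω)^(c j))
        (ℙ : Measure Ω) := by
      have h := (iIndepFun.indepFun_finset_prod_of_notMem hg
        (fun j => (hmeas j).pow_const (c j)) hi).symm
      have : (∏ j ∈ s, fun ω => (a j ω)^(c j)) = fun ω => ∏ j ∈ s, (a j ω)^(c j) := by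
        ext ω; simp [Finset.prod_apply]
      rwa [this] at h
    rw [show (∫ (ω : Ω), ∏ j ∈ insert i s, a j ω ^ c j ∂(ℙ : Measure Ω))
        = ∫ (ω : Ω), (a i ω ^ c i) * ∏ j ∈ s, a j ω ^ c j ∂(ℙ : Measure Ω) by
      congr 1; ext ω; rw [Finset.prod_insert hi], Finset.prod_insert hi, ← ih]
    have hmul := hInd.integral_mul_eq_mul_integral
      (by simpa using (integrable_prod_pow hmeas hdist c {i}).aestronglyMeasurable)
      (integrable_prod_pow hmeas hdist c s).aestronglyMeasurable
    simpa using hmul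

def cnt {N : ℕ} (m n p q i : Fin N) : ℕ :=
  (if i = m then 1 else 0) + (if i = n then 1 else 0)
    + (if i = p then 1 else 0) + (if i = q then 1 else 0)

lemma prod_eq_cnt (m n p q : Fin N) (ω : Ω) :
    a m ω * a n ω * (a p ω * a q ω) = ∏ i : Fin N, (a i ω)^(cnt m n p q i) := by
  have h1 : ∀ r : Fin N, (∏ i : Fin N, (a i ω)^(if i = r then 1 else 0)) = a r ω := by
    intro r
    rw [Finset.prod_congr rfl (fun i _ => by
      rw [show (a i ω)^(if i = r then 1 else 0) = if i = r then a i ω else 1 by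
        split <;> simp])]
    simp [Finset.prod_ite_eq']
  simp only [cnt, pow_add, Finset.prod_mul_distrib, h1]
  ring

include hmeas hdist hindep in
lemma integral_four (m n p q : Fin N) :
    ∫ ω, a m ω * a n ω * (a p ω * a q ω) ∂(ℙ : Measure Ω)
      = if (∀ i : Fin N, Even (cnt m n p q i)) then 1 else 0 := by
  have : (fun ω => a m ω * a n ω * (a p ω * a q ω))
      = fun ω => ∏ i : Fin N, (a i ω)^(cnt m n p q i) := by
    ext ω; exact prod_eq_cnt m n p q ω
  rw [this, integral_prod_pow hmeas hdist hindep]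
  simp_rw [integral_pow_a hmeas hdist]
  by_cases hall : ∀ i : Fin N, Even (cnt m n p q i)
  · rw [if_pos hall]
    exact Finset.prod_eq_one fun i _ => if_pos (hall i)
  · rw [if_neg hall]
    push_neg at hall
    obtain ⟨i, hi⟩ := hall
    exact Finset.prod_eq_zero (Finset.mem_univ i) (if_neg hi)

lemma comb {N : ℕ} (m n p q : Fin N)
    (hall : ∀ i : Fin N, Even (cnt m n p q i))
    (hsum : (((m:ℕ):ℤ) - ((n:ℕ):ℤ)) + ((((p:ℕ):ℤ)) - ((q:ℕ):ℤ)) = 0) :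
    (m = n ∧ p = q) ∨ (m = q ∧ p = n) := by
  by_cases h1 : m = n
  · by_cases h2 : p = q
    · exact Or.inl ⟨h1, h2⟩
    · exfalso
      have hp := hall p
      subst h1
      rcases eq_or_ne p m with h | h
      · have hmq : m ≠ q := fun hh => h2 (h.trans hh)
        simp [cnt, h, h2, hmq, Nat.even_iff] at hp
      · simp [cnt, h, h2, Nat.even_iff] at hp
  · by_cases h3 : m = q
    · by_cases h4 : n = p
      · exact Or.inr ⟨h3, h4.symm⟩
      · exfalso
        have hn := hall n
        have hnq : n ≠ q := fun h => h1 (h3.trans h.symm)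
        simp [cnt, Ne.symm h1, h4, hnq, Nat.even_iff] at hn
    · by_cases h5 : m = p
      · by_cases h6 : q = n
        · exfalso
          have e5 : ((m:ℕ):ℤ) = ((p:ℕ):ℤ) := by exact_mod_cast congrArg Fin.val h5
          have e6 : ((q:ℕ):ℤ) = ((n:ℕ):ℤ) := by exact_mod_cast congrArg Fin.val h6
          exact h1 (Fin.ext (by omega))
        · exfalso
          have hq := hall q
          have hqp : q ≠ p := fun h => h3 (h5.trans h.symm)
          simp [cnt, Ne.symm h3, h6, hqp, Nat.even_iff] at hq
      · exfalso
        have hm := hall m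
        simp [cnt, h1, h5, h3, Nat.even_iff] at hm

include hmeas hdist in
lemma integrable_quad (m n p q : Fin N) :
    Integrable (fun ω => a m ω * a n ω * (a p ω * a q ω)) (ℙ : Measure Ω) := by
  have h := integrable_prod_pow hmeas hdist (cnt m n p q) Finset.univ
  have he : (fun ω => a m ω * a n ω * (a p ω * a q ω))
      = fun ω => ∏ i : Fin N, (a i ω)^(cnt m n p q i) :=
    funext fun ω => prod_eq_cnt m n p q ω
  rwa [he]

include hmeas hdist hindep in
lemma EG_le :
    ∫ ω, (∫ u in (0:ℝ)..1, ((Complex.normSq (SS (fun n => a n ω) u)):ℝ)^2) ∂(ℙ : Measure Ω)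
      ≤ 2*(N:ℝ)^2 := by
  classical
  set dd : ((Fin N × Fin N) × (Fin N × Fin N)) → ℝ := fun i =>
    (if (((i.1.1:ℕ):ℤ) - ((i.1.2:ℕ):ℤ)) + ((((i.2.1:ℕ):ℤ)) - ((i.2.2:ℕ):ℤ)) = 0
      then (1:ℝ) else 0) with hdd
  have hrw : (fun ω => (∫ u in (0:ℝ)..1, ((Complex.normSq (SS (fun n => a n ω) u)):ℝ)^2))
      = fun ω => ∑ i : (Fin N × Fin N) × (Fin N × Fin N),
          (a i.1.1 ω * a i.1.2 ω * (a i.2.1 ω * a i.2.2 ω)) * dd i :=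
    funext fun ω => integral_SS_four (fun n => a n ω)
  rw [hrw, integral_finset_sum _
    (fun i _ => (integrable_quad hmeas hdist i.1.1 i.1.2 i.2.1 i.2.2).mul_const (dd i))]
  have hterm : ∀ i : (Fin N × Fin N) × (Fin N × Fin N),
      (∫ ω, (a i.1.1 ω * a i.1.2 ω * (a i.2.1 ω * a i.2.2 ω)) * dd i ∂(ℙ : Measure Ω))
        ≤ (if i.1.1 = i.1.2 ∧ i.2.1 = i.2.2 then (1:ℝ) else 0)
          + (if i.1.1 = i.2.2 ∧ i.2.1 = i.1.2 then (1:ℝ) else 0) := by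
    intro i
    rw [integral_mul_const, integral_four hmeas hdist hindep]
    by_cases hall : ∀ j : Fin N, Even (cnt i.1.1 i.1.2 i.2.1 i.2.2 j)
    · by_cases hz : (((i.1.1:ℕ):ℤ) - ((i.1.2:ℕ):ℤ)) + ((((i.2.1:ℕ):ℤ)) - ((i.2.2:ℕ):ℤ)) = 0
      · rcases comb i.1.1 i.1.2 i.2.1 i.2.2 hall hz with h | h
        · rw [if_pos hall, hdd]; simp only [hz, if_pos, if_pos h]
          have : (0:ℝ) ≤ if i.1.1 = i.2.2 ∧ i.2.1 = i.1.2 then (1:ℝ) else 0 := by positivity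
          linarith
        · rw [if_pos hall, hdd]; simp only [hz, if_pos, if_pos h]
          have : (0:ℝ) ≤ if i.1.1 = i.1.2 ∧ i.2.1 = i.2.2 then (1:ℝ) else 0 := by positivity
          linarith
      · rw [hdd]; simp only [hz, if_false, mul_zero]
        positivity
    · rw [if_neg hall, zero_mul]
      positivity
  refine le_trans (Finset.sum_le_sum (fun i _ => hterm i)) ?_
  rw [Finset.sum_add_distrib]
  have hs1 : (∑ i : (Fin N × Fin N) × (Fin N × Fin N),
      if i.1.1 = i.1.2 ∧ i.2.1 = i.2.2 then (1:ℝ) else 0) = (N:ℝ)^2 := by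
    have inner : ∀ x x1 : Fin N, (∑ x2 : Fin N, ∑ x3 : Fin N,
        if x = x1 then (if x2 = x3 then (1:ℝ) else 0) else 0) = if x = x1 then (N:ℝ) else 0 := by
      intro x x1
      by_cases h : x = x1 <;> simp [h, Finset.sum_ite_eq']
    rw [← Finset.univ_product_univ, Finset.sum_product]
    simp_rw [← Finset.univ_product_univ, Finset.sum_product, ite_and]
    rw [Finset.sum_congr rfl fun x _ => Finset.sum_congr rfl fun x1 _ => inner x x1]
    simp [Finset.sum_ite_eq]
    ring
  have hs2 : (∑ i : (Fin N × Fin N) × (Fin N × Fin N),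
      if i.1.1 = i.2.2 ∧ i.2.1 = i.1.2 then (1:ℝ) else 0) = (N:ℝ)^2 := by
    rw [← Finset.univ_product_univ, Finset.sum_product]
    simp_rw [← Finset.univ_product_univ, Finset.sum_product]
    simp [Finset.sum_ite_eq, ite_and]
    ring
  rw [hs1, hs2]
  linarith

include hmeas in
lemma G_meas :
    Measurable (fun ω => ∫ u in (0:ℝ)..1,
      ((Complex.normSq (SS (fun n => a n ω) u)):ℝ)^2) := by
  have hrw : (fun ω => (∫ u in (0:ℝ)..1, ((Complex.normSq (SS (fun n => a n ω) u)):ℝ)^2))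
      = fun ω => ∑ i : (Fin N × Fin N) × (Fin N × Fin N),
          (a i.1.1 ω * a i.1.2 ω * (a i.2.1 ω * a i.2.2 ω)) *
          (if (((i.1.1:ℕ):ℤ) - ((i.1.2:ℕ):ℤ)) + ((((i.2.1:ℕ):ℤ)) - ((i.2.2:ℕ):ℤ)) = 0
            then (1:ℝ) else 0) :=
    funext fun ω => integral_SS_four (fun n => a n ω)
  rw [hrw]
  exact Finset.measurable_sum _ fun i _ =>
    (((hmeas _).mul (hmeas _)).mul ((hmeas _).mul (hmeas _))).mul_const _

include hmeas hdist in
lemma G_int :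
    Integrable (fun ω => ∫ u in (0:ℝ)..1,
      ((Complex.normSq (SS (fun n => a n ω) u)):ℝ)^2) (ℙ : Measure Ω) := by
  have hrw : (fun ω => (∫ u in (0:ℝ)..1, ((Complex.normSq (SS (fun n => a n ω) u)):ℝ)^2))
      = fun ω => ∑ i : (Fin N × Fin N) × (Fin N × Fin N),
          (a i.1.1 ω * a i.1.2 ω * (a i.2.1 ω * a i.2.2 ω)) *
          (if (((i.1.1:ℕ):ℤ) - ((i.1.2:ℕ):ℤ)) + ((((i.2.1:ℕ):ℤ)) - ((i.2.2:ℕ):ℤ)) = 0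
            then (1:ℝ) else 0) :=
    funext fun ω => integral_SS_four (fun n => a n ω)
  rw [hrw]
  exact integrable_finset_sum _ fun i _ =>
    (integrable_quad hmeas hdist i.1.1 i.1.2 i.2.1 i.2.2).mul_const _

end Prob

lemma SS_cont {N : ℕ} (b : Fin N → ℝ) : Continuous (SS b) := by
  unfold SS; fun_prop

lemma det_bound {N : ℕ} (hN : 1 ≤ N) (b : Fin N → ℝ) (hb : ∀ n, b n = 1 ∨ b n = -1)
    (x : ℝ) (hx : 0 < x)
    (hG : (∫ u in (0:ℝ)..1, ((Complex.normSq (SS b u)):ℝ)^2) ≤ (N:ℝ)^2/(4*x))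
    (𝔪 : Set ℝ) (h𝔪 : MeasurableSet 𝔪) (hsub : 𝔪 ⊆ Set.Icc 0 1)
    (hvol : volume 𝔪 = ENNReal.ofReal x) :
    (∫ u in 𝔪, (Complex.normSq (SS b u) : ℝ)) ≤
      (1/2) * ∫ u in (0:ℝ)..1, (Complex.normSq (SS b u) : ℝ) := by
  have hFc : Continuous fun u => (Complex.normSq (SS b u) : ℝ) :=
    Complex.continuous_normSq.comp (SS_cont b)
  have hFnn : ∀ u, 0 ≤ (Complex.normSq (SS b u) : ℝ) := fun u => Complex.normSq_nonneg _
  set F : ℝ → ℝ := fun u => (Complex.normSq (SS b u) : ℝ) with hF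
  -- RHS = N
  have hRHS : (∫ u in (0:ℝ)..1, F u) = (N:ℝ) := by
    rw [hF, integral_SS_sq b]
    rw [Finset.sum_congr rfl (fun n _ => show (b n)^2 = 1 by
      rcases hb n with h | h <;> rw [h] <;> norm_num)]
    simp
  -- G value
  set G : ℝ := ∫ u in (0:ℝ)..1, (F u)^2 with hGdef
  have hGnn : 0 ≤ G := intervalIntegral.integral_nonneg (by norm_num) (fun u _ => sq_nonneg _)
  -- lintegral bound
  have hlin : (∫⁻ u in 𝔪, ENNReal.ofReal (F u)) ≤ ENNReal.ofReal ((N:ℝ)/2) := by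
    have hmeasF : Measurable fun u => ENNReal.ofReal (F u) :=
      ENNReal.measurable_ofReal.comp hFc.measurable
    have hpq : Real.HolderConjugate 2 2 := Real.holderConjugate_iff.mpr ⟨by norm_num, by norm_num⟩
    have hhold := ENNReal.lintegral_mul_le_Lp_mul_Lq (volume.restrict 𝔪) hpq
      hmeasF.aemeasurable (aemeasurable_const (b := (1 : ENNReal)))
    simp only [Pi.mul_apply, mul_one, ENNReal.one_rpow] at hhold
    have h1 : (∫⁻ _ in 𝔪, (1:ENNReal)) = ENNReal.ofReal x := by
      rw [MeasureTheory.setLIntegral_one]; exact hvol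
    have h2 : (∫⁻ u in 𝔪, (ENNReal.ofReal (F u)) ^ (2:ℝ)) ≤ ENNReal.ofReal G := by
      have e1 : ∀ u, (ENNReal.ofReal (F u)) ^ (2:ℝ) = ENNReal.ofReal ((F u)^2) := by
        intro u
        rw [show ((2:ℝ)) = ((2:ℕ):ℝ) by norm_num, ENNReal.rpow_natCast,
          ← ENNReal.ofReal_pow (hFnn u)]
      simp_rw [e1]
      calc (∫⁻ u in 𝔪, ENNReal.ofReal ((F u)^2))
          ≤ ∫⁻ u in Set.Icc (0:ℝ) 1, ENNReal.ofReal ((F u)^2) := lintegral_mono_set hsub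
        _ = ENNReal.ofReal (∫ u in Set.Icc (0:ℝ) 1, (F u)^2) := by
            rw [← MeasureTheory.ofReal_integral_eq_lintegral_ofReal (f := fun u => (F u)^2)
              (by exact (hFc.pow 2).integrableOn_Icc : Integrable (fun u => (F u)^2) (volume.restrict (Set.Icc (0:ℝ) 1))) (Filter.Eventually.of_forall fun u => sq_nonneg _)]
        _ = ENNReal.ofReal G := by
            rw [hGdef, intervalIntegral.integral_of_le (by norm_num : (0:ℝ) ≤ 1),
              MeasureTheory.integral_Icc_eq_integral_Ioc]
    calc (∫⁻ u in 𝔪, ENNReal.ofReal (F u))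
        ≤ (∫⁻ u in 𝔪, (ENNReal.ofReal (F u)) ^ (2:ℝ)) ^ (1/(2:ℝ))
            * (∫⁻ _ in 𝔪, (1:ENNReal)) ^ (1/(2:ℝ)) := hhold
      _ ≤ (ENNReal.ofReal G) ^ (1/(2:ℝ)) * (ENNReal.ofReal x) ^ (1/(2:ℝ)) := by
          gcongr
          rw [h1]
      _ = ENNReal.ofReal (G ^ (1/(2:ℝ)) * x ^ (1/(2:ℝ))) := by
          rw [ENNReal.ofReal_rpow_of_nonneg hGnn (by norm_num),
            ENNReal.ofReal_rpow_of_nonneg hx.le (by norm_num),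
            ← ENNReal.ofReal_mul (by positivity)]
      _ ≤ ENNReal.ofReal ((N:ℝ)/2) := by
          apply ENNReal.ofReal_le_ofReal
          rw [← Real.sqrt_eq_rpow, ← Real.sqrt_eq_rpow, ← Real.sqrt_mul hGnn]
          have hGx : G * x ≤ ((N:ℝ)/2)^2 := by
            have : (N:ℝ)^2/(4*x) * x = ((N:ℝ)/2)^2 := by field_simp; ring
            nlinarith [hG]
          calc Real.sqrt (G * x) ≤ Real.sqrt (((N:ℝ)/2)^2) := Real.sqrt_le_sqrt hGx
            _ = (N:ℝ)/2 := Real.sqrt_sq (by positivity)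
  -- convert to Bochner
  have hBoch : (∫ u in 𝔪, F u) = (∫⁻ u in 𝔪, ENNReal.ofReal (F u)).toReal := by
    rw [MeasureTheory.integral_eq_lintegral_of_nonneg_ae
      (Filter.Eventually.of_forall fun u => hFnn u)
      hFc.aestronglyMeasurable.restrict]
  rw [hBoch, hRHS]
  calc (∫⁻ u in 𝔪, ENNReal.ofReal (F u)).toReal
      ≤ (ENNReal.ofReal ((N:ℝ)/2)).toReal := by
        apply ENNReal.toReal_mono (by simp) hlin
    _ = (N:ℝ)/2 := ENNReal.toReal_ofReal (by positivity)
    _ = 1/2 * (N:ℝ) := by ring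

/-- For independent random signs `a_1,…,a_N` and `0 < x ≤ 1`: with probability at
least `1 − √(8x)`, every measurable `𝔪 ⊆ [0,1]` of measure `x` satisfies
`∫_𝔪 |S|² ≤ (1/2)∫_0^1 |S|²`. -/
theorem prob_M_le_half (N : ℕ) (hN : 1 ≤ N)
    {Ω : Type*} [MeasureSpace Ω] [IsProbabilityMeasure (ℙ : Measure Ω)]
    (a : Fin N → Ω → ℝ) (hmeas : ∀ n, Measurable (a n))
    (hindep : iIndepFun a ℙ)
    (hdist : ∀ n, ℙ {ω | a n ω = 1} = 1/2 ∧ ℙ {ω | a n ω = -1} = 1/2)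
    (x : ℝ) (hx : 0 < x) (hx1 : x ≤ 1) :
    ℙ {ω | ∀ 𝔪 : Set ℝ, MeasurableSet 𝔪 → 𝔪 ⊆ Set.Icc (0:ℝ) 1 →
        volume 𝔪 = ENNReal.ofReal x →
        (∫ u in 𝔪, ‖∑ n : Fin N,
          (a n ω : ℂ) * Complex.exp (2 * Real.pi * Complex.I * ((n : ℕ) + 1) * u)‖ ^ 2) ≤
        (1 / 2) * ∫ u in (0:ℝ)..1, ‖∑ n : Fin N,
          (a n ω : ℂ) * Complex.exp (2 * Real.pi * Complex.I * ((n : ℕ) + 1) * u)‖ ^ 2}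
      ≥ ENNReal.ofReal (1 - Real.sqrt (8 * x)) := by
  classical
  rw [ge_iff_le]
  by_cases hbig : 1 ≤ 8 * x
  · have hs : (1:ℝ) ≤ Real.sqrt (8*x) := by
      rw [show (1:ℝ) = Real.sqrt 1 by simp]
      exact Real.sqrt_le_sqrt hbig
    rw [ENNReal.ofReal_eq_zero.2 (by linarith)]
    exact zero_le
  push_neg at hbig
  have hNpos : (0:ℝ) < N := by exact_mod_cast hN
  set G : Ω → ℝ :=
    fun ω => ∫ u in (0:ℝ)..1, ((Complex.normSq (SS (fun n => a n ω) u)):ℝ)^2 with hGdef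
  set c : ℝ := (N:ℝ)^2/(4*x) with hc
  have hcpos : 0 < c := by rw [hc]; positivity
  have hGmeas : Measurable G := G_meas hmeas
  have hEG : ∫ ω, G ω ∂(ℙ : Measure Ω) ≤ 2*(N:ℝ)^2 := EG_le hmeas hdist hindep
  have hGnn : ∀ ω, 0 ≤ G ω :=
    fun ω => intervalIntegral.integral_nonneg (by norm_num) (fun u _ => sq_nonneg _)
  have hlint : (∫⁻ ω, ENNReal.ofReal (G ω) ∂(ℙ : Measure Ω))
      = ENNReal.ofReal (∫ ω, G ω ∂(ℙ : Measure Ω)) :=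
    (MeasureTheory.ofReal_integral_eq_lintegral_ofReal (G_int hmeas hdist)
      (Filter.Eventually.of_forall hGnn)).symm
  have hmark : ℙ {ω | c ≤ G ω} ≤ ENNReal.ofReal (8*x) := by
    have h := MeasureTheory.meas_ge_le_lintegral_div (μ := (ℙ : Measure Ω))
      (f := fun ω => ENNReal.ofReal (G ω))
      ((ENNReal.measurable_ofReal.comp hGmeas).aemeasurable)
      (ε := ENNReal.ofReal c)
      (by simp only [ne_eq, ENNReal.ofReal_eq_zero, not_le]; linarith) (by simp)
    have hsub : {ω | c ≤ G ω} ⊆ {ω | ENNReal.ofReal c ≤ ENNReal.ofReal (G ω)} :=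
      fun ω h' => ENNReal.ofReal_le_ofReal h'
    refine le_trans (measure_mono hsub) (le_trans h ?_)
    rw [hlint]
    refine le_trans (ENNReal.div_le_div_right
      (ENNReal.ofReal_le_ofReal hEG) _) ?_
    rw [← ENNReal.ofReal_div_of_pos hcpos]
    apply ENNReal.ofReal_le_ofReal
    rw [hc]
    have heq : 2*(N:ℝ)^2 / ((N:ℝ)^2/(4*x)) = 8*x := by
      field_simp
      ring
    rw [heq]
  have hA : ℙ {ω | ∀ n, a n ω = 1 ∨ a n ω = -1}ᶜ = 0 := by
    have h := ae_all_iff.2 (fun n => sign_ae hmeas hdist n)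
    rw [MeasureTheory.ae_iff] at h
    rw [Set.compl_setOf]
    exact h
  have hBc : 1 - ENNReal.ofReal (8*x) ≤ ℙ {ω | c ≤ G ω}ᶜ := by
    have hBmeas : MeasurableSet {ω | c ≤ G ω} := by exact hGmeas measurableSet_Ici
    rw [prob_compl_eq_one_sub hBmeas]
    exact tsub_le_tsub_left hmark 1
  have hsub2 : ({ω | ∀ n, a n ω = 1 ∨ a n ω = -1} ∩ {ω | c ≤ G ω}ᶜ)
      ⊆ {ω | ∀ 𝔪 : Set ℝ, MeasurableSet 𝔪 → 𝔪 ⊆ Set.Icc (0:ℝ) 1 →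
        volume 𝔪 = ENNReal.ofReal x →
        (∫ u in 𝔪, ‖∑ n : Fin N,
          (a n ω : ℂ) * Complex.exp (2 * Real.pi * Complex.I * ((n : ℕ) + 1) * u)‖ ^ 2) ≤
        (1 / 2) * ∫ u in (0:ℝ)..1, ‖∑ n : Fin N,
          (a n ω : ℂ) * Complex.exp (2 * Real.pi * Complex.I * ((n : ℕ) + 1) * u)‖ ^ 2} := by
    rintro ω ⟨hsgn, hGω⟩ 𝔪 hm hsubm hvolm
    have hGle : G ω ≤ c := (lt_of_not_ge (by simpa using hGω)).le
    have hpt : ∀ u : ℝ, ‖∑ n : Fin N,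
        (a n ω : ℂ) * Complex.exp (2 * Real.pi * Complex.I * ((n:ℕ) + 1) * u)‖ ^ 2
          = (Complex.normSq (SS (fun n => a n ω) u) : ℝ) := fun u => Complex.sq_norm _
    simp_rw [hpt]
    exact det_bound hN (fun n => a n ω) hsgn x hx hGle 𝔪 hm hsubm hvolm
  calc ENNReal.ofReal (1 - Real.sqrt (8*x))
      ≤ 1 - ENNReal.ofReal (8*x) := by
        have h8 : 8*x ≤ Real.sqrt (8*x) := by
          nlinarith [Real.sq_sqrt (show (0:ℝ) ≤ 8*x by linarith),
            Real.sqrt_nonneg (8*x)]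
        calc ENNReal.ofReal (1 - Real.sqrt (8*x))
            ≤ ENNReal.ofReal (1 - 8*x) := ENNReal.ofReal_le_ofReal (by linarith)
          _ = 1 - ENNReal.ofReal (8*x) := by
              rw [ENNReal.ofReal_sub _ (by linarith), ENNReal.ofReal_one]
    _ ≤ ℙ {ω | c ≤ G ω}ᶜ := hBc
    _ ≤ ℙ ({ω | ∀ n, a n ω = 1 ∨ a n ω = -1} ∩ {ω | c ≤ G ω}ᶜ) := by
        have : {ω | c ≤ G ω}ᶜ ⊆ ({ω | ∀ n, a n ω = 1 ∨ a n ω = -1} ∩ {ω | c ≤ G ω}ᶜ)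
            ∪ {ω | ∀ n, a n ω = 1 ∨ a n ω = -1}ᶜ := by
          intro ω h
          by_cases h' : ∀ n, a n ω = 1 ∨ a n ω = -1
          · exact Or.inl ⟨h', h⟩
          · exact Or.inr h'
        refine le_trans (measure_mono this) ?_
        refine le_trans (measure_union_le _ _) ?_
        rw [hA, add_zero]
    _ ≤ _ := measure_mono hsub2
end

section
/- Let a_1,…,a_N be complex numbers with Σ_{n ≤ N}|a_n|² > 0, let δ ∈ (0,1), set A = 8δ^{-2}, and suppose Q² ≥ 1536π·δ^{-4}·N. If every Lebesgue-measurable set 𝔪 ⊆ [0,1] of measure 1/A satisfies ∫_𝔪 |S(u)|² du ≤ (1/2)·∫_0^1 |S(u)|² du, then Σ_{q ≤ Q} Σ_{1 ≤ a ≤ q, gcd(a,q)=1} |S(a/q)|² ≥ (Q²δ²/32)·Σ_{n ≤ N}|a_n|². -/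
open MeasureTheory Real

section LargeSieveAux
open Finset intervalIntegral


private lemma exp_cont (c : ℂ) : Continuous (fun u : ℝ => Complex.exp (c * u)) := by
  fun_prop

private lemma orth {k l : ℕ} (hkl : k ≠ l) :
    ∫ u in (0:ℝ)..1, Complex.exp ((2 * Real.pi * Complex.I * k - 2 * Real.pi * Complex.I * l) * u) = 0 := by
  have hm : ((k:ℂ) - l) ≠ 0 := by
    simpa [sub_eq_zero] using fun h => hkl (by exact_mod_cast h)
  have hc : (2 * Real.pi * Complex.I * k - 2 * Real.pi * Complex.I * l) = (((k:ℤ) - (l:ℤ) : ℤ) : ℂ) * (2 * Real.pi * Complex.I) := by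
    push_cast; ring
  have hc0 : (2 * Real.pi * Complex.I * k - 2 * Real.pi * Complex.I * l) ≠ 0 := by
    rw [hc]
    apply mul_ne_zero
    · push_cast; exact hm
    · simp [Real.pi_ne_zero, Complex.I_ne_zero, Complex.ext_iff]
  have hexp : Complex.exp (((((k:ℤ) - l : ℤ)):ℂ) * (2 * Real.pi * Complex.I)) = 1 :=
    Complex.exp_int_mul_two_pi_mul_I _
  push_cast at hexp
  rw [integral_exp_mul_complex hc0, hc]
  push_cast
  simp [hexp]

private lemma parseval (M : ℕ) (c : ℕ → ℂ) :
    ∫ u in (0:ℝ)..1, ‖∑ k ∈ Icc 1 M, c k * Complex.exp (2 * Real.pi * Complex.I * k * u)‖ ^ 2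
      = ∑ k ∈ Icc 1 M, ‖c k‖ ^ 2 := by
  have hconj : ∀ (l : ℕ) (u : ℝ), (starRingEnd ℂ) (Complex.exp (2 * Real.pi * Complex.I * l * u)) = Complex.exp (-(2 * Real.pi * Complex.I * l * u)) := by
    intro l u
    rw [← Complex.exp_conj]
    congr 1
    simp [Complex.ext_iff]
  apply Complex.ofReal_injective
  rw [← intervalIntegral.integral_ofReal]
  have key : ∀ u : ℝ, ((‖∑ k ∈ Icc 1 M, c k * Complex.exp (2 * Real.pi * Complex.I * k * u)‖ ^ 2 : ℝ) : ℂ)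
      = ∑ k ∈ Icc 1 M, ∑ l ∈ Icc 1 M, (c k * (starRingEnd ℂ) (c l)) *
          Complex.exp ((2 * Real.pi * Complex.I * k - 2 * Real.pi * Complex.I * l) * u) := by
    intro u
    rw [Complex.sq_norm, ← Complex.mul_conj, map_sum, Finset.sum_mul_sum]
    refine Finset.sum_congr rfl fun k _ => Finset.sum_congr rfl fun l _ => ?_
    rw [map_mul, hconj, mul_mul_mul_comm, ← Complex.exp_add]
    congr 1
    ring
  calc (∫ u in (0:ℝ)..1, ((‖∑ k ∈ Icc 1 M, c k * Complex.exp (2 * Real.pi * Complex.I * k * u)‖ ^ 2 : ℝ) : ℂ))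
      = ∫ u in (0:ℝ)..1, ∑ k ∈ Icc 1 M, ∑ l ∈ Icc 1 M, (c k * (starRingEnd ℂ) (c l)) *
          Complex.exp ((2 * Real.pi * Complex.I * k - 2 * Real.pi * Complex.I * l) * u) := by
        refine intervalIntegral.integral_congr fun u _ => key u
    _ = ∑ k ∈ Icc 1 M, ∑ l ∈ Icc 1 M, (c k * (starRingEnd ℂ) (c l)) *
          ∫ u in (0:ℝ)..1, Complex.exp ((2 * Real.pi * Complex.I * k - 2 * Real.pi * Complex.I * l) * u) := by
        rw [intervalIntegral.integral_finset_sum]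
        · refine Finset.sum_congr rfl fun k _ => ?_
          rw [intervalIntegral.integral_finset_sum]
          · exact Finset.sum_congr rfl fun l _ => intervalIntegral.integral_const_mul _ _
          · exact fun l _ => Continuous.intervalIntegrable (by fun_prop) _ _
        · exact fun k _ => Continuous.intervalIntegrable (by fun_prop) _ _
    _ = ∑ k ∈ Icc 1 M, ((‖c k‖ ^2 : ℝ) : ℂ) := by
        refine Finset.sum_congr rfl fun k hk => ?_
        rw [Finset.sum_eq_single k]
        · rw [sub_self]
          have h1 : ∫ u in (0:ℝ)..1, Complex.exp ((0:ℂ) * u) = 1 := by simp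
          rw [h1, mul_one, Complex.mul_conj, Complex.sq_norm]
        · intro l _ hlk
          rw [orth (Ne.symm hlk), mul_zero]
        · intro h; exact absurd hk h
    _ = ((∑ k ∈ Icc 1 M, ‖c k‖ ^ 2 : ℝ) : ℂ) := by push_cast; ring


section
variable (M : ℕ) (c : ℕ → ℂ)

private noncomputable def S0 : ℝ → ℂ := fun u => ∑ k ∈ Icc 1 M, c k * Complex.exp (2 * Real.pi * Complex.I * k * u)
private noncomputable def S1 : ℝ → ℂ := fun u => ∑ k ∈ Icc 1 M, (c k * (2 * Real.pi * Complex.I * k)) * Complex.exp (2 * Real.pi * Complex.I * k * u)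

private lemma S0_cont : Continuous (S0 M c) := by unfold S0; fun_prop
private lemma S1_cont : Continuous (S1 M c) := by unfold S1; fun_prop

private lemma S0_deriv (u : ℝ) : HasDerivAt (S0 M c) (S1 M c u) u := by
  unfold S0 S1
  refine HasDerivAt.fun_sum fun k _ => ?_
  have h0 : HasDerivAt (fun u : ℝ => (u : ℂ)) 1 u := Complex.ofRealCLM.hasDerivAt
  have h1 : HasDerivAt (fun u : ℝ => 2 * Real.pi * Complex.I * k * u)
      (2 * Real.pi * Complex.I * k) u := by
    simpa using h0.const_mul (2 * Real.pi * Complex.I * k)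
  have h2 := (h1.cexp).const_mul (c k)
  exact h2.congr_deriv (by ring)

-- F and its derivative
private noncomputable def FF : ℝ → ℝ := fun u => ‖S0 M c u‖ ^ 2
private noncomputable def DD : ℝ → ℝ :=
  fun u => 2 * ((S0 M c u).re * (S1 M c u).re + (S0 M c u).im * (S1 M c u).im)

private lemma DD_cont : Continuous (DD M c) := by
  unfold DD
  have h0 := S0_cont M c
  have h1 := S1_cont M c
  fun_prop

private lemma FF_deriv (u : ℝ) : HasDerivAt (FF M c) (DD M c u) u := by
  have hS := S0_deriv M c u
  have hre : HasDerivAt (fun y => (S0 M c y).re) ((S1 M c u).re) u :=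
    (Complex.reCLM.hasFDerivAt.comp_hasDerivAt u hS)
  have him : HasDerivAt (fun y => (S0 M c y).im) ((S1 M c u).im) u :=
    (Complex.imCLM.hasFDerivAt.comp_hasDerivAt u hS)
  have h : HasDerivAt (fun y => (S0 M c y).re * (S0 M c y).re + (S0 M c y).im * (S0 M c y).im)
      ((S1 M c u).re * (S0 M c u).re + (S0 M c u).re * (S1 M c u).re +
        ((S1 M c u).im * (S0 M c u).im + (S0 M c u).im * (S1 M c u).im)) u :=
    (hre.mul hre).add (him.mul him)
  have heq : FF M c = fun y => (S0 M c y).re * (S0 M c y).re + (S0 M c y).im * (S0 M c y).im := by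
    funext y
    unfold FF
    rw [Complex.sq_norm, Complex.normSq_apply]
  rw [heq]
  convert h using 1
  unfold DD
  ring

private lemma DD_bound (u : ℝ) : |DD M c u| ≤ 2 * ‖S0 M c u‖ * ‖S1 M c u‖ := by
  unfold DD
  have h : (S0 M c u).re * (S1 M c u).re + (S0 M c u).im * (S1 M c u).im
      = ((starRingEnd ℂ) (S0 M c u) * S1 M c u).re := by
    simp [Complex.mul_re]
  rw [abs_mul, abs_two, h]
  have h2 := Complex.abs_re_le_norm ((starRingEnd ℂ) (S0 M c u) * S1 M c u)
  rw [norm_mul, Complex.norm_conj] at h2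
  nlinarith [norm_nonneg (S0 M c u), norm_nonneg (S1 M c u)]
end

section
variable (M : ℕ) (c : ℕ → ℂ)
private lemma FF_cont : Continuous (FF M c) := by
  unfold FF; exact (continuous_norm.comp (S0_cont M c)).pow 2

private lemma absS1_cont : Continuous (fun u => ‖S1 M c u‖ ^ 2) :=
  (continuous_norm.comp (S1_cont M c)).pow 2

private lemma FF_nonneg (u : ℝ) : 0 ≤ FF M c u := by unfold FF; positivity

private lemma DD_int_bound (hM1 : 1 ≤ M) :
    ∫ u in (0:ℝ)..1, |DD M c u| ≤ 4 * Real.pi * M * ∑ k ∈ Icc 1 M, ‖c k‖ ^ 2 := by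
  have hMpos : (0:ℝ) < 2 * Real.pi * M := by
    have := Real.pi_pos
    have : (1:ℝ) ≤ (M:ℝ) := by exact_mod_cast hM1
    nlinarith [Real.pi_pos]
  have hpt : ∀ u : ℝ, |DD M c u| ≤ 2 * Real.pi * M * FF M c u + (1 / (2 * Real.pi * M)) * ‖S1 M c u‖ ^ 2 := by
    intro u
    have h1 := DD_bound M c u
    have ha := norm_nonneg (S0 M c u)
    have hb := norm_nonneg (S1 M c u)
    set lam := 2 * Real.pi * (M:ℝ) with hlam
    set a1 := ‖S0 M c u‖ with ha1
    set b1 := ‖S1 M c u‖ with hb1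
    have key : 2 * a1 * b1 ≤ lam * a1 ^ 2 + (1 / lam) * b1 ^ 2 := by
      have expand : lam * (lam * a1 ^ 2 + (1 / lam) * b1 ^ 2) = lam^2 * a1^2 + b1^2 := by
        field_simp
      have h4 : lam * (2 * a1 * b1) ≤ lam^2 * a1^2 + b1^2 := by nlinarith [sq_nonneg (lam * a1 - b1)]
      exact (mul_le_mul_iff_right₀ hMpos).mp (by rw [expand]; exact h4)
    calc |DD M c u| ≤ 2 * ‖S0 M c u‖ * ‖S1 M c u‖ := h1
      _ ≤ _ := by unfold FF; exact key
  have hint : ∫ u in (0:ℝ)..1, |DD M c u|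
      ≤ ∫ u in (0:ℝ)..1, (2 * Real.pi * M * FF M c u + (1 / (2 * Real.pi * M)) * ‖S1 M c u‖ ^ 2) := by
    refine intervalIntegral.integral_mono_on (by norm_num) ?_ ?_ (fun u _ => hpt u)
    · exact ((DD_cont M c).abs).intervalIntegrable _ _
    · exact (Continuous.intervalIntegrable ((continuous_const.mul (FF_cont M c)).add (continuous_const.mul (absS1_cont M c))) _ _)
  have hsplit : ∫ u in (0:ℝ)..1, (2 * Real.pi * M * FF M c u + (1 / (2 * Real.pi * M)) * ‖S1 M c u‖ ^ 2)
      = 2 * Real.pi * M * (∫ u in (0:ℝ)..1, FF M c u) + (1 / (2 * Real.pi * M)) * ∫ u in (0:ℝ)..1, ‖S1 M c u‖ ^ 2 := by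
    rw [intervalIntegral.integral_add (f := fun u => 2 * Real.pi * M * FF M c u) (g := fun u => (1 / (2 * Real.pi * M)) * ‖S1 M c u‖ ^ 2) (Continuous.intervalIntegrable (continuous_const.mul (FF_cont M c)) _ _) (Continuous.intervalIntegrable (continuous_const.mul (absS1_cont M c)) _ _),
      intervalIntegral.integral_const_mul, intervalIntegral.integral_const_mul]
  have hP1 : ∫ u in (0:ℝ)..1, FF M c u = ∑ k ∈ Icc 1 M, ‖c k‖ ^ 2 := parseval M c
  have hP2 : ∫ u in (0:ℝ)..1, ‖S1 M c u‖ ^ 2 = ∑ k ∈ Icc 1 M, ‖c k * (2 * Real.pi * Complex.I * k)‖ ^ 2 :=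
    parseval M _
  have hcoef : ∑ k ∈ Icc 1 M, ‖c k * (2 * Real.pi * Complex.I * k)‖ ^ 2
      ≤ 4 * Real.pi ^ 2 * M ^ 2 * ∑ k ∈ Icc 1 M, ‖c k‖ ^ 2 := by
    rw [Finset.mul_sum]
    refine Finset.sum_le_sum fun k hk => ?_
    have hkM : (k : ℝ) ≤ M := by exact_mod_cast (Finset.mem_Icc.mp hk).2
    have hk0 : (0:ℝ) ≤ k := Nat.cast_nonneg k
    have habs : ‖2 * Real.pi * Complex.I * k‖ = 2 * Real.pi * k := by
      simp [abs_of_nonneg Real.pi_pos.le]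
    rw [norm_mul, habs, mul_pow]
    have hk2 : (k:ℝ)^2 ≤ (M:ℝ)^2 := by nlinarith
    have h1 : (2 * Real.pi * k) ^ 2 ≤ 4 * Real.pi ^ 2 * M ^ 2 := by
      calc (2 * Real.pi * k) ^ 2 = 4 * Real.pi ^ 2 * (k:ℝ)^2 := by ring
        _ ≤ 4 * Real.pi ^ 2 * (M:ℝ)^2 := by
            apply mul_le_mul_of_nonneg_left hk2; positivity
    nlinarith [norm_nonneg (c k), sq_nonneg (‖c k‖)]
  calc ∫ u in (0:ℝ)..1, |DD M c u| ≤ _ := hint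
    _ = _ := hsplit
    _ ≤ 2 * Real.pi * M * (∑ k ∈ Icc 1 M, ‖c k‖ ^ 2)
        + (1 / (2 * Real.pi * M)) * (4 * Real.pi ^ 2 * M ^ 2 * ∑ k ∈ Icc 1 M, ‖c k‖ ^ 2) := by
        rw [hP1, hP2]
        have := hcoef
        have h0 : 0 < 1 / (2 * Real.pi * M) := by positivity
        nlinarith [hcoef, h0]
    _ = 4 * Real.pi * M * ∑ k ∈ Icc 1 M, ‖c k‖ ^ 2 := by
        field_simp
        ring
end


section
variable {F D : ℝ → ℝ}

private lemma window_lemma (hFd : ∀ u, HasDerivAt F (D u) u) (hDc : Continuous D)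
    (hFc : Continuous F) (hFnn : ∀ u, 0 ≤ F u)
    {W : Set ℝ} (hWm : MeasurableSet W) (hWsub : W ⊆ Set.Icc (0:ℝ) 1) (hconv : Convex ℝ W)
    {x : ℝ} (hx : x ∈ W) {w : ℝ} (hw : 0 < w) (hvol : volume W ≤ ENNReal.ofReal w) :
    (1 / w) * (∫ u in W, F u) - (∫ u in W, |D u|) ≤ F x := by
  have hDint : IntegrableOn (fun u => |D u|) W volume :=
    (Continuous.integrableOn_Icc (by fun_prop)).mono_set hWsub
  have hFint : IntegrableOn F W volume := (hFc.integrableOn_Icc).mono_set hWsub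
  have hDnn : 0 ≤ ∫ u in W, |D u| := setIntegral_nonneg hWm fun u _ => abs_nonneg _
  have hpt : ∀ u ∈ W, F u ≤ F x + ∫ t in W, |D t| := by
    intro u hu
    have hftc : ∫ t in u..x, D t = F x - F u :=
      intervalIntegral.integral_eq_sub_of_hasDerivAt (fun t _ => hFd t)
        (hDc.intervalIntegrable _ _)
    have hseg : Set.uIcc u x ⊆ W := hconv.ordConnected.uIcc_subset hu hx
    have habs : |∫ t in u..x, D t| ≤ ∫ t in W, |D t| := by
      rcases le_total u x with h | h
      · calc |∫ t in u..x, D t| ≤ ∫ t in u..x, |D t| :=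
              intervalIntegral.abs_integral_le_integral_abs h
          _ = ∫ t in Set.Ioc u x, |D t| := intervalIntegral.integral_of_le h
          _ ≤ ∫ t in W, |D t| := by
              refine setIntegral_mono_set hDint (Filter.Eventually.of_forall fun t => abs_nonneg _) (Filter.Eventually.of_forall ?_)
              intro t ht
              exact hseg (by rw [Set.uIcc_of_le h]; exact Set.Ioc_subset_Icc_self ht)
      · have : (∫ t in u..x, D t) = - ∫ t in x..u, D t := by
          rw [intervalIntegral.integral_symm]
        rw [this, abs_neg]
        calc |∫ t in x..u, D t| ≤ ∫ t in x..u, |D t| :=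
              intervalIntegral.abs_integral_le_integral_abs h
          _ = ∫ t in Set.Ioc x u, |D t| := intervalIntegral.integral_of_le h
          _ ≤ ∫ t in W, |D t| := by
              refine setIntegral_mono_set hDint (Filter.Eventually.of_forall fun t => abs_nonneg _) (Filter.Eventually.of_forall ?_)
              intro t ht
              exact hseg (by rw [Set.uIcc_of_ge h]; exact Set.Ioc_subset_Icc_self ht)
    have : F u = F x - ∫ t in u..x, D t := by rw [hftc]; ring
    rw [this]
    have := neg_abs_le (∫ t in u..x, D t)
    linarith
  have hvolfin : volume W < ⊤ := lt_of_le_of_lt hvol ENNReal.ofReal_lt_top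
  have hconst : IntegrableOn (fun _ : ℝ => F x + ∫ t in W, |D t|) W volume := by
    apply (integrableOn_const_iff (by finiteness)).mpr
    exact Or.inr hvolfin
  have hIF : (∫ u in W, F u) ≤ w * (F x + ∫ t in W, |D t|) := by
    calc (∫ u in W, F u) ≤ ∫ _ in W, (F x + ∫ t in W, |D t|) :=
          setIntegral_mono_on hFint hconst hWm hpt
      _ = (volume W).toReal * (F x + ∫ t in W, |D t|) := by
          rw [setIntegral_const]; rfl
      _ ≤ w * (F x + ∫ t in W, |D t|) := by
          apply mul_le_mul_of_nonneg_right
          · exact ENNReal.toReal_le_of_le_ofReal hw.le hvol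
          · have := hFnn x; linarith
  have h2 : (1 / w) * (∫ u in W, F u) ≤ F x + ∫ t in W, |D t| := by
    calc (1 / w) * (∫ u in W, F u) ≤ (1 / w) * (w * (F x + ∫ t in W, |D t|)) :=
          mul_le_mul_of_nonneg_left hIF (by positivity)
      _ = F x + ∫ t in W, |D t| := by field_simp
  linarith
end


private lemma sum_union_le' {s t : Finset ℝ} {f : ℝ → ℝ} (hf : ∀ x, 0 ≤ f x) :
    ∑ x ∈ s ∪ t, f x ≤ ∑ x ∈ s, f x + ∑ x ∈ t, f x := by
  have h : ∑ x ∈ s ∪ t, f x + ∑ x ∈ s ∩ t, f x = ∑ x ∈ s, f x + ∑ x ∈ t, f x :=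
    Finset.sum_union_inter
  have h2 : 0 ≤ ∑ x ∈ s ∩ t, f x := Finset.sum_nonneg fun x _ => hf x
  linarith

private lemma sum_biUnion_le' {ι : Type*} [DecidableEq ι] (s : Finset ι) (t : ι → Finset ℝ) {f : ℝ → ℝ}
    (hf : ∀ x, 0 ≤ f x) : ∑ x ∈ s.biUnion t, f x ≤ ∑ i ∈ s, ∑ x ∈ t i, f x := by
  classical
  induction s using Finset.induction with
  | empty => simp
  | insert a s' h ih =>
    rw [Finset.biUnion_insert, Finset.sum_insert h]
    calc ∑ x ∈ t a ∪ s'.biUnion t, f x ≤ ∑ x ∈ t a, f x + ∑ x ∈ s'.biUnion t, f x := sum_union_le' hf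
      _ ≤ _ := by linarith [ih]

private lemma sum_image_le' {ι : Type*} [DecidableEq ι] (s : Finset ι) (g : ι → ℝ) {f : ℝ → ℝ}
    (hf : ∀ x, 0 ≤ f x) : ∑ x ∈ s.image g, f x ≤ ∑ i ∈ s, f (g i) := by
  classical
  induction s using Finset.induction with
  | empty => simp
  | insert a s' h ih =>
    rw [Finset.image_insert, Finset.sum_insert h]
    by_cases hm : g a ∈ s'.image g
    · rw [Finset.insert_eq_self.mpr hm]
      linarith [hf (g a)]
    · rw [Finset.sum_insert hm]
      linarith

private lemma card_odd_filter (m : ℕ) :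
    ((Finset.range (2*m)).filter (fun a => a % 2 = 1)).card = m := by
  have himg : (Finset.range (2*m)).filter (fun a => a % 2 = 1) = (Finset.range m).image (fun i => 2*i+1) := by
    ext a
    simp only [Finset.mem_filter, Finset.mem_range, Finset.mem_image]
    constructor
    · rintro ⟨h1, h2⟩; exact ⟨a / 2, by omega, by omega⟩
    · rintro ⟨i, hi, rfl⟩; omega
  rw [himg, Finset.card_image_of_injective _ (fun i j hij => by omega), Finset.card_range]

private lemma tot_even {q : ℕ} (hq : q % 2 = 0) : 2 * q.totient ≤ q := by
  obtain ⟨m, rfl⟩ : ∃ m, q = 2*m := ⟨q/2, by omega⟩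
  have htot : (2*m).totient = ((Finset.range (2*m)).filter (fun a => (2*m).Coprime a)).card :=
    Nat.totient_eq_card_coprime (2*m)
  rw [htot]
  have hsub : (Finset.range (2*m)).filter (fun a => (2*m).Coprime a) ⊆ (Finset.range (2*m)).filter (fun a => a % 2 = 1) := by
    intro a ha
    rw [Finset.mem_filter] at ha ⊢
    refine ⟨ha.1, ?_⟩
    by_contra h
    have h2 : 2 ∣ a := by omega
    have h3 : 2 ∣ 2*m := ⟨m, rfl⟩
    have h4 := Nat.dvd_gcd h3 h2
    have h5 : Nat.gcd (2*m) a = 1 := ha.2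
    omega
  have hcard := Finset.card_le_card hsub
  rw [card_odd_filter] at hcard
  omega

private lemma coprime_count {q : ℕ} (hq : 2 ≤ q) :
    ((Finset.range (q+1)).filter (fun a => Nat.gcd a q = 1)).card = q.totient := by
  have h1 : Finset.range (q+1) = insert q (Finset.range q) := by
    rw [Finset.range_add_one]
  rw [h1, Finset.filter_insert]
  have hq1 : ¬ (Nat.gcd q q = 1) := by rw [Nat.gcd_self]; omega
  rw [if_neg hq1, Nat.totient_eq_card_coprime]
  congr 1
  apply Finset.filter_congr
  intro a _
  simp [Nat.Coprime, Nat.gcd_comm]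

private lemma tel_key {P : ℝ} (hP : 0 < P) (t : ℝ) :
    4 * P * max 0 t ≤ (max 0 (t+P))^2 - (max 0 (t-P))^2 := by
  rcases le_total t 0 with h | h
  · rw [max_eq_left h]
    have h1 : max 0 (t-P) ≤ max 0 (t+P) := max_le_max le_rfl (by linarith)
    have h2 : 0 ≤ max 0 (t-P) := le_max_left _ _
    nlinarith
  · rw [max_eq_right h]
    rcases le_total P t with h3 | h3
    · rw [max_eq_right (by linarith), max_eq_right (by linarith)]; nlinarith
    · rw [max_eq_right (by linarith), max_eq_left (by linarith)]; nlinarith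

private lemma sum_rho_le {n : ℕ} {B P : ℝ} (hB : 0 < B) (hP : 0 < P) :
    ∑ q ∈ Finset.Icc 1 n, ((if q % 2 = 1 then (2:ℝ) else 1) * max 0 (1/B - q*P)) ≤ 3 / (4*P*B^2) := by
  set ρ : ℕ → ℝ := fun q => (if q % 2 = 1 then (2:ℝ) else 1) * max 0 (1/B - q*P) with hρ
  have hrnn : ∀ q : ℕ, 0 ≤ ρ q := by
    intro q
    apply mul_nonneg (by split <;> norm_num) (le_max_left _ _)
  have hodd : ∑ q ∈ (Finset.Icc 1 n).filter (fun q => q % 2 = 1), ρ q ≤ 1 / (2*P*B^2) := by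
    set G : ℕ → ℝ := fun i => (max 0 (1/B - 2*(i:ℝ)*P))^2 with hG
    have hsub : (Finset.Icc 1 n).filter (fun q => q % 2 = 1) ⊆ (Finset.range n).image (fun i => 2*i+1) := by
      intro q hq
      rw [Finset.mem_filter, Finset.mem_Icc] at hq
      obtain ⟨⟨hq1, hq2⟩, hq3⟩ := hq
      have hq3' : q % 2 = 1 := hq3
      rw [Finset.mem_image]
      exact ⟨q / 2, Finset.mem_range.mpr (by omega), by omega⟩
    calc ∑ q ∈ (Finset.Icc 1 n).filter (fun q => q % 2 = 1), ρ q
        ≤ ∑ q ∈ (Finset.range n).image (fun i => 2*i+1), ρ q :=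
          Finset.sum_le_sum_of_subset_of_nonneg hsub (fun q _ _ => hrnn q)
      _ = ∑ i ∈ Finset.range n, ρ (2*i+1) := Finset.sum_image (fun i _ j _ hij => by omega)
      _ ≤ ∑ i ∈ Finset.range n, (G i - G (i+1)) / (2*P) := by
          refine Finset.sum_le_sum fun i _ => ?_
          rw [hρ]
          simp only [Nat.mul_mod_right]
          rw [if_pos (by omega)]
          have hkey := tel_key hP (1/B - ((2*i+1 : ℕ):ℝ)*P)
          have he1 : 1/B - ((2*i+1 : ℕ):ℝ)*P + P = 1/B - 2*(i:ℝ)*P := by push_cast; ring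
          have he2 : 1/B - ((2*i+1 : ℕ):ℝ)*P - P = 1/B - 2*((i+1 : ℕ):ℝ)*P := by push_cast; ring
          rw [he1, he2] at hkey
          rw [le_div_iff₀ (by linarith : (0:ℝ) < 2*P), hG]
          nlinarith [hkey]
      _ = (G 0 - G n) / (2*P) := by rw [← Finset.sum_div, Finset.sum_range_sub' G n]
      _ ≤ 1 / (2*P*B^2) := by
          have h0 : G 0 = (1/B)^2 := by
            rw [hG]
            simp only [Nat.cast_zero]
            rw [show (1/B - 2*(0:ℝ)*P) = 1/B by ring, max_eq_right (by positivity)]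
          have hn : 0 ≤ G n := sq_nonneg _
          rw [div_le_div_iff₀ (by linarith) (by positivity)]
          have hle : G 0 - G n ≤ (1/B)^2 := by rw [h0]; linarith
          calc (G 0 - G n) * (2*P*B^2) ≤ (1/B)^2 * (2*P*B^2) :=
                mul_le_mul_of_nonneg_right hle (by positivity)
            _ = 1 * (2*P) := by field_simp
  have heven : ∑ q ∈ (Finset.Icc 1 n).filter (fun q => ¬ q % 2 = 1), ρ q ≤ 1 / (4*P*B^2) := by
    set G : ℕ → ℝ := fun i => (max 0 (1/B - (2*(i:ℝ)+1)*P))^2 with hG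
    have hsub : (Finset.Icc 1 n).filter (fun q => ¬ q % 2 = 1) ⊆ (Finset.range n).image (fun i => 2*i+2) := by
      intro q hq
      rw [Finset.mem_filter, Finset.mem_Icc] at hq
      obtain ⟨⟨hq1, hq2⟩, hq3⟩ := hq
      have hq3' : ¬ (q % 2 = 1) := hq3
      rw [Finset.mem_image]
      exact ⟨q / 2 - 1, Finset.mem_range.mpr (by omega), by omega⟩
    calc ∑ q ∈ (Finset.Icc 1 n).filter (fun q => ¬ q % 2 = 1), ρ q
        ≤ ∑ q ∈ (Finset.range n).image (fun i => 2*i+2), ρ q :=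
          Finset.sum_le_sum_of_subset_of_nonneg hsub (fun q _ _ => hrnn q)
      _ = ∑ i ∈ Finset.range n, ρ (2*i+2) := Finset.sum_image (fun i _ j _ hij => by omega)
      _ ≤ ∑ i ∈ Finset.range n, (G i - G (i+1)) / (4*P) := by
          refine Finset.sum_le_sum fun i _ => ?_
          rw [hρ]
          simp only []
          rw [if_neg (by omega)]
          have hkey := tel_key hP (1/B - ((2*i+2 : ℕ):ℝ)*P)
          have he1 : 1/B - ((2*i+2 : ℕ):ℝ)*P + P = 1/B - (2*(i:ℝ)+1)*P := by push_cast; ring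
          have he2 : 1/B - ((2*i+2 : ℕ):ℝ)*P - P = 1/B - (2*((i+1 : ℕ):ℝ)+1)*P := by push_cast; ring
          rw [he1, he2] at hkey
          rw [le_div_iff₀ (by linarith : (0:ℝ) < 4*P), hG]
          nlinarith [hkey]
      _ = (G 0 - G n) / (4*P) := by rw [← Finset.sum_div, Finset.sum_range_sub' G n]
      _ ≤ 1 / (4*P*B^2) := by
          have h0 : G 0 ≤ (1/B)^2 := by
            rw [hG]
            have h1 : max 0 (1/B - (2*(0:ℝ)+1)*P) ≤ 1/B := by
              apply max_le (by positivity)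
              nlinarith
            have h2 : 0 ≤ max 0 (1/B - (2*(0:ℝ)+1)*P) := le_max_left _ _
            simpa using pow_le_pow_left₀ h2 h1 2
          have hn : 0 ≤ G n := sq_nonneg _
          rw [div_le_div_iff₀ (by linarith) (by positivity)]
          have hle : G 0 - G n ≤ (1/B)^2 := by linarith
          calc (G 0 - G n) * (4*P*B^2) ≤ (1/B)^2 * (4*P*B^2) :=
                mul_le_mul_of_nonneg_right hle (by positivity)
            _ = 1 * (4*P) := by field_simp
  have hsplit := Finset.sum_filter_add_sum_filter_not (Finset.Icc 1 n) (fun q => q % 2 = 1) ρ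
  have hfinal : (1:ℝ) / (2*P*B^2) + 1 / (4*P*B^2) = 3 / (4*P*B^2) := by
    field_simp
    ring
  calc ∑ q ∈ Finset.Icc 1 n, ρ q
      = ∑ q ∈ (Finset.Icc 1 n).filter (fun q => q % 2 = 1), ρ q
        + ∑ q ∈ (Finset.Icc 1 n).filter (fun q => ¬ q % 2 = 1), ρ q := hsplit.symm
    _ ≤ 1 / (2*P*B^2) + 1 / (4*P*B^2) := add_le_add hodd heven
    _ = 3 / (4*P*B^2) := hfinal


private lemma pad {m : Set ℝ} (hm : MeasurableSet m) (hsub : m ⊆ Set.Icc 0 1) {α : ℝ}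
    (hα0 : 0 < α) (hα1 : α ≤ 1) (hvol : volume m ≤ ENNReal.ofReal α) :
    ∃ m' : Set ℝ, MeasurableSet m' ∧ m ⊆ m' ∧ m' ⊆ Set.Icc 0 1 ∧ volume m' = ENNReal.ofReal α := by
  set f : ℝ → ℝ := fun t => (volume (m ∪ Set.Icc 0 t)).toReal with hf
  have hfin : ∀ t : ℝ, volume (m ∪ Set.Icc 0 t) < ⊤ := by
    intro t
    refine lt_of_le_of_lt (measure_union_le _ _) (ENNReal.add_lt_top.mpr ⟨?_, ?_⟩)
    · exact lt_of_le_of_lt hvol ENNReal.ofReal_lt_top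
    · rw [Real.volume_Icc]; exact ENNReal.ofReal_lt_top
  have hmono : ∀ s t : ℝ, s ≤ t → f s ≤ f t := by
    intro s t hst
    apply ENNReal.toReal_le_toReal (hfin s).ne (hfin t).ne |>.mpr
    exact measure_mono (Set.union_subset_union_right m (Set.Icc_subset_Icc_right hst))
  have hlip : ∀ s t : ℝ, s ≤ t → f t ≤ f s + (t - s) := by
    intro s t hst
    have hsub2 : m ∪ Set.Icc 0 t ⊆ (m ∪ Set.Icc 0 s) ∪ Set.Icc s t := by
      intro u hu
      rcases hu with hu | hu
      · exact Or.inl (Or.inl hu)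
      · rcases le_total u s with h | h
        · exact Or.inl (Or.inr ⟨hu.1, h⟩)
        · exact Or.inr ⟨h, hu.2⟩
    have h1 : volume (m ∪ Set.Icc 0 t) ≤ volume (m ∪ Set.Icc 0 s) + ENNReal.ofReal (t - s) := by
      refine (measure_mono hsub2).trans ((measure_union_le _ _).trans ?_)
      rw [Real.volume_Icc]
    calc f t ≤ ((volume (m ∪ Set.Icc 0 s)) + ENNReal.ofReal (t-s)).toReal := by
          apply ENNReal.toReal_le_toReal (hfin t).ne ?_ |>.mpr h1
          exact (ENNReal.add_lt_top.mpr ⟨hfin s, ENNReal.ofReal_lt_top⟩).ne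
      _ = f s + (t - s) := by
          rw [ENNReal.toReal_add (hfin s).ne ENNReal.ofReal_lt_top.ne,
            ENNReal.toReal_ofReal (by linarith)]
  have hcont : ContinuousOn f (Set.Icc 0 1) := by
    have : LipschitzOnWith 1 f (Set.Icc 0 1) := by
      rw [lipschitzOnWith_iff_dist_le_mul]
      intro s _ t _
      rw [Real.dist_eq, Real.dist_eq]
      simp only [NNReal.coe_one, one_mul]
      rcases le_total s t with h | h
      · have h1 := hlip s t h
        have h2 := hmono s t h
        rw [abs_of_nonpos (by linarith), abs_of_nonpos (by linarith)]
        linarith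
      · have h1 := hlip t s h
        have h2 := hmono t s h
        rw [abs_of_nonneg (by linarith), abs_of_nonneg (by linarith)]
        linarith
    exact this.continuousOn
  have hf0 : f 0 ≤ α := by
    have : volume (m ∪ Set.Icc 0 0) ≤ ENNReal.ofReal α := by
      refine (measure_union_le _ _).trans ?_
      rw [Set.Icc_self, Real.volume_singleton, add_zero]
      exact hvol
    exact ENNReal.toReal_le_of_le_ofReal hα0.le this
  have hf1 : f 1 = 1 := by
    have h1 : m ∪ Set.Icc 0 1 = Set.Icc 0 1 := Set.union_eq_self_of_subset_left hsub
    rw [hf]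
    simp only [h1, Real.volume_Icc]
    norm_num
  have hIVT := intermediate_value_Icc (by norm_num : (0:ℝ) ≤ 1) hcont
  have hαmem : α ∈ Set.Icc (f 0) (f 1) := by rw [hf1]; exact ⟨hf0, hα1⟩
  obtain ⟨t₀, ht₀mem, ht₀⟩ := hIVT hαmem
  refine ⟨m ∪ Set.Icc 0 t₀, hm.union measurableSet_Icc, Set.subset_union_left, ?_, ?_⟩
  · exact Set.union_subset hsub (Set.Icc_subset_Icc_right ht₀mem.2)
  · have := hfin t₀
    rw [← ht₀, hf]
    exact (ENNReal.ofReal_toReal this.ne).symm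


private noncomputable def pts (n : ℕ) : Finset ℝ :=
  insert 0 ((Finset.Icc 1 n).biUnion (fun q =>
    ((Finset.Icc 1 q).filter (fun r => Nat.gcd r q = 1)).image (fun r : ℕ => (r:ℝ)/(q:ℝ))))

private lemma pts_mem_Icc {n : ℕ} {x : ℝ} (hx : x ∈ pts n) : x ∈ Set.Icc (0:ℝ) 1 := by
  unfold pts at hx
  rcases Finset.mem_insert.mp hx with h | h
  · rw [h]; exact ⟨le_refl 0, by norm_num⟩
  · rw [Finset.mem_biUnion] at h
    obtain ⟨q, hq, hx⟩ := h
    rw [Finset.mem_image] at hx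
    obtain ⟨r, hr, rfl⟩ := hx
    rw [Finset.mem_filter, Finset.mem_Icc] at hr
    rw [Finset.mem_Icc] at hq
    have h1 : (1:ℝ) ≤ q := by exact_mod_cast hq.1
    have h2 : (r:ℝ) ≤ q := by exact_mod_cast hr.1.2
    have h3 : (0:ℝ) ≤ r := Nat.cast_nonneg r
    constructor
    · positivity
    · rw [div_le_one (by linarith)]; exact h2

private lemma mem_pts_of_frac {n q a : ℕ} (hq1 : 1 ≤ q) (hqn : q ≤ n) (haq : a ≤ q)
    (hgcd : Nat.gcd a q = 1) : ((a:ℝ)/(q:ℝ)) ∈ pts n := by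
  unfold pts
  rcases Nat.eq_zero_or_pos a with rfl | ha
  · have h0 : (0:ℕ) = ((0:ℕ):ℝ) / (q:ℝ) → True := fun _ => trivial
    have : ((0:ℕ):ℝ)/(q:ℝ) = 0 := by simp
    rw [this]
    exact Finset.mem_insert_self _ _
  · apply Finset.mem_insert_of_mem
    rw [Finset.mem_biUnion]
    refine ⟨q, Finset.mem_Icc.mpr ⟨hq1, hqn⟩, ?_⟩
    rw [Finset.mem_image]
    exact ⟨a, Finset.mem_filter.mpr ⟨Finset.mem_Icc.mpr ⟨ha, haq⟩, hgcd⟩, rfl⟩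

private lemma uncovered_subset {n : ℕ} (hn : 1 ≤ n) {B P : ℝ} (hB : B = (n:ℝ)+1) (hP : 0 < P) :
    Set.Icc (0:ℝ) 1 \ (⋃ x ∈ pts n, Metric.closedBall x P) ⊆
      ⋃ q ∈ Finset.Icc 1 n, ⋃ a ∈ (Finset.range (q+1)).filter (fun a => Nat.gcd a q = 1),
        ({u : ℝ | P < |u - (a:ℝ)/(q:ℝ)| ∧ |u - (a:ℝ)/(q:ℝ)| ≤ 1/(q*B)} ∩ Set.Icc 0 1) := by
  intro u hu
  obtain ⟨⟨hu0, hu1⟩, hucov⟩ := hu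
  obtain ⟨r, hr1, hr2⟩ := Real.exists_rat_abs_sub_le_and_den_le u (by omega : 0 < n)
  have hden1 : 1 ≤ r.den := r.pos
  have hdenR : (1:ℝ) ≤ (r.den:ℝ) := by exact_mod_cast hden1
  have hdpos : (0:ℝ) < (r.den:ℝ) := by linarith
  have hBpos : (0:ℝ) < B := by rw [hB]; positivity
  have hBgt1 : (1:ℝ) < B := by
    rw [hB]
    have h1 : (1:ℝ) ≤ (n:ℝ) := by exact_mod_cast hn
    linarith
  have houter : |u - (r:ℝ)| ≤ 1/((r.den:ℝ)*B) := by
    rw [hB]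
    calc |u - (r:ℝ)| ≤ 1 / (((n:ℝ)+1) * (r.den:ℝ)) := hr1
      _ = 1/((r.den:ℝ)*((n:ℝ)+1)) := by ring_nf
  have hlt_den : 1/((r.den:ℝ)*B) < 1/(r.den:ℝ) := by
    apply div_lt_div_of_pos_left one_pos hdpos
    nlinarith
  have hrcast : (r:ℝ) = (r.num:ℝ)/(r.den:ℝ) := by rw [Rat.cast_def]
  have hnumcast : ((r.num:ℝ)) = (r:ℝ) * r.den := by rw [hrcast]; field_simp
  -- num ≥ 0
  have hrlow : -(1/(r.den:ℝ)) < (r:ℝ) := by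
    have h1 := abs_sub_le_iff.mp houter
    have : u - 1/((r.den:ℝ)*B) ≤ (r:ℝ) := by linarith [h1.1]
    calc -(1/(r.den:ℝ)) < -(1/((r.den:ℝ)*B)) := by linarith
      _ ≤ u - 1/((r.den:ℝ)*B) := by linarith
      _ ≤ (r:ℝ) := this
  have hnum0 : 0 ≤ r.num := by
    have h8 : (-1:ℝ) < (r.num:ℝ) := by
      rw [hnumcast]
      calc (-1:ℝ) = -(1/(r.den:ℝ)) * r.den := by field_simp
        _ < (r:ℝ) * r.den := mul_lt_mul_of_pos_right hrlow hdpos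
    have h9 : (-1:ℤ) < r.num := by exact_mod_cast h8
    omega
  -- num ≤ den
  have hrhigh : (r:ℝ) < 1 + 1/(r.den:ℝ) := by
    have h1 := abs_sub_le_iff.mp houter
    have : (r:ℝ) ≤ u + 1/((r.den:ℝ)*B) := by linarith [h1.2]
    calc (r:ℝ) ≤ u + 1/((r.den:ℝ)*B) := this
      _ ≤ 1 + 1/((r.den:ℝ)*B) := by linarith
      _ < 1 + 1/(r.den:ℝ) := by linarith
  have hnumden : r.num ≤ (r.den : ℤ) := by
    have h8 : (r.num:ℝ) < (r.den:ℝ) + 1 := by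
      rw [hnumcast]
      calc (r:ℝ) * r.den < (1 + 1/(r.den:ℝ)) * r.den := mul_lt_mul_of_pos_right hrhigh hdpos
        _ = (r.den:ℝ) + 1 := by field_simp
    have h9 : (r.num:ℤ) < (r.den:ℤ) + 1 := by exact_mod_cast h8
    omega
  -- the fraction
  set a : ℕ := r.num.toNat with ha
  have hacast : ((a:ℤ)) = r.num := Int.toNat_of_nonneg hnum0
  have haR : ((a:ℝ)) = (r.num:ℝ) := by exact_mod_cast congrArg (Int.cast : ℤ → ℝ) hacast
  have haq : a ≤ r.den := by omega
  have hgcd : Nat.gcd a r.den = 1 := by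
    have hred := r.reduced
    have : a = r.num.natAbs := by omega
    rw [this]
    exact hred
  have hfrac : ((a:ℝ))/(r.den:ℝ) = (r:ℝ) := by rw [haR, ← hrcast]
  have hxmem : ((a:ℝ))/(r.den:ℝ) ∈ pts n := mem_pts_of_frac hden1 hr2 haq hgcd
  -- u is not in the ball around a/den
  have hfar : P < |u - ((a:ℝ))/(r.den:ℝ)| := by
    by_contra h
    push_neg at h
    apply hucov
    rw [Set.mem_iUnion₂]
    refine ⟨((a:ℝ))/(r.den:ℝ), hxmem, ?_⟩
    rw [Metric.mem_closedBall, Real.dist_eq]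
    exact h
  rw [Set.mem_iUnion₂]
  refine ⟨r.den, ?_, ?_⟩
  · exact Finset.mem_Icc.mpr ⟨hden1, hr2⟩
  rw [Set.mem_iUnion₂]
  refine ⟨a, ?_, ?_⟩
  · rw [Finset.mem_filter, Finset.mem_range]
    exact ⟨by omega, hgcd⟩
  · refine ⟨⟨hfar, ?_⟩, ⟨hu0, hu1⟩⟩
    rw [hfrac]
    exact houter


private lemma ofReal_twice_le {x : ℝ} : ENNReal.ofReal x + ENNReal.ofReal x ≤ ENNReal.ofReal (2 * max 0 x) := by
  rcases le_total x 0 with h | h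
  · rw [ENNReal.ofReal_eq_zero.mpr h]
    simp
  · rw [max_eq_right h, ← ENNReal.ofReal_add h h]
    apply ENNReal.ofReal_le_ofReal
    linarith

private lemma ann_vol_le {q a : ℕ} {B P : ℝ} (hq : 1 ≤ q) (hB : 0 < B) (hP : 0 < P) :
    volume ({u : ℝ | P < |u - (a:ℝ)/(q:ℝ)| ∧ |u - (a:ℝ)/(q:ℝ)| ≤ 1/(q*B)} ∩ Set.Icc 0 1)
      ≤ ENNReal.ofReal (2 * max 0 (1/((q:ℝ)*B) - P)) := by
  set c : ℝ := (a:ℝ)/(q:ℝ)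
  set R : ℝ := 1/((q:ℝ)*B)
  have hsub : {u : ℝ | P < |u - c| ∧ |u - c| ≤ R} ∩ Set.Icc 0 1 ⊆
      Set.Icc (c - R) (c - P) ∪ Set.Icc (c + P) (c + R) := by
    rintro u ⟨⟨h1, h2⟩, _⟩
    rcases le_total u c with h | h
    · left
      rw [abs_of_nonpos (by linarith)] at h1 h2
      constructor <;> linarith
    · right
      rw [abs_of_nonneg (by linarith)] at h1 h2
      constructor <;> linarith
  calc volume ({u : ℝ | P < |u - c| ∧ |u - c| ≤ R} ∩ Set.Icc 0 1)
      ≤ volume (Set.Icc (c - R) (c - P) ∪ Set.Icc (c + P) (c + R)) := measure_mono hsub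
    _ ≤ volume (Set.Icc (c - R) (c - P)) + volume (Set.Icc (c + P) (c + R)) := measure_union_le _ _
    _ = ENNReal.ofReal (R - P) + ENNReal.ofReal (R - P) := by
        rw [Real.volume_Icc, Real.volume_Icc]
        congr 1 <;> ring_nf
    _ ≤ ENNReal.ofReal (2 * max 0 (R - P)) := ofReal_twice_le

private lemma ann_vol_le_one {a : ℕ} {B P : ℝ} (hB : 0 < B) (hP : 0 < P) (ha : a ≤ 1) :
    volume ({u : ℝ | P < |u - (a:ℝ)/((1:ℕ):ℝ)| ∧ |u - (a:ℝ)/((1:ℕ):ℝ)| ≤ 1/((1:ℕ)*B)} ∩ Set.Icc 0 1)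
      ≤ ENNReal.ofReal (max 0 (1/B - P)) := by
  have hcast : ((1:ℕ):ℝ) = 1 := by norm_num
  interval_cases a
  · -- a = 0 : c = 0, annulus ∩ [0,1] ⊆ [P, R]
    have hsub : {u : ℝ | P < |u - (0:ℕ)/((1:ℕ):ℝ)| ∧ |u - ((0:ℕ):ℝ)/((1:ℕ):ℝ)| ≤ 1/((1:ℕ)*B)} ∩ Set.Icc 0 1 ⊆
        Set.Icc P (1/B) := by
      rintro u ⟨⟨h1, h2⟩, hu0, hu1⟩
      simp only [Nat.cast_zero, Nat.cast_one, zero_div, sub_zero, one_mul] at h1 h2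
      rw [abs_of_nonneg hu0] at h1 h2
      exact ⟨h1.le, h2⟩
    calc volume _ ≤ volume (Set.Icc P (1/B)) := measure_mono hsub
      _ = ENNReal.ofReal (1/B - P) := Real.volume_Icc
      _ ≤ ENNReal.ofReal (max 0 (1/B - P)) := ENNReal.ofReal_le_ofReal (le_max_right _ _)
  · -- a = 1 : c = 1
    have hsub : {u : ℝ | P < |u - ((1:ℕ):ℝ)/((1:ℕ):ℝ)| ∧ |u - ((1:ℕ):ℝ)/((1:ℕ):ℝ)| ≤ 1/((1:ℕ)*B)} ∩ Set.Icc 0 1 ⊆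
        Set.Icc (1 - 1/B) (1 - P) := by
      rintro u ⟨⟨h1, h2⟩, hu0, hu1⟩
      simp only [Nat.cast_one, div_one, one_mul] at h1 h2
      rw [abs_of_nonpos (by linarith)] at h1 h2
      constructor <;> linarith
    calc volume _ ≤ volume (Set.Icc (1 - 1/B) (1 - P)) := measure_mono hsub
      _ = ENNReal.ofReal (1/B - P) := by rw [Real.volume_Icc]; congr 1; ring
      _ ≤ ENNReal.ofReal (max 0 (1/B - P)) := ENNReal.ofReal_le_ofReal (le_max_right _ _)

private lemma phi_bound {q : ℕ} (hq1 : 1 ≤ q) {B P : ℝ} (hB : 0 < B) (hP : 0 < P)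
    (hcard : (c : ℕ) = q.totient) (hq2 : 2 ≤ q) :
    (c : ℝ) * (2 * max 0 (1/((q:ℝ)*B) - P)) ≤ (if q % 2 = 1 then (2:ℝ) else 1) * max 0 (1/B - q*P) := by
  have hqR : (0:ℝ) < (q:ℝ) := by exact_mod_cast hq1
  have hm0 : 0 ≤ max 0 (1/((q:ℝ)*B) - P) := le_max_left _ _
  have hqmax : (q:ℝ) * max 0 (1/((q:ℝ)*B) - P) = max 0 (1/B - (q:ℝ)*P) := by
    rw [mul_max_of_nonneg _ _ hqR.le]
    congr 1
    · exact mul_zero _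
    · field_simp
  subst hcard
  by_cases hodd : q % 2 = 1
  · rw [if_pos hodd]
    have hphi : (q.totient : ℝ) ≤ (q:ℝ) := by exact_mod_cast Nat.totient_le q
    calc (q.totient:ℝ) * (2 * max 0 (1/((q:ℝ)*B) - P))
        ≤ (q:ℝ) * (2 * max 0 (1/((q:ℝ)*B) - P)) :=
          mul_le_mul_of_nonneg_right hphi (by positivity)
      _ = 2 * ((q:ℝ) * max 0 (1/((q:ℝ)*B) - P)) := by ring
      _ = 2 * max 0 (1/B - (q:ℝ)*P) := by rw [hqmax]
  · rw [if_neg hodd]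
    have hphi : (2:ℝ) * (q.totient : ℝ) ≤ (q:ℝ) := by
      exact_mod_cast tot_even (by omega)
    calc (q.totient:ℝ) * (2 * max 0 (1/((q:ℝ)*B) - P))
        = (2 * (q.totient:ℝ)) * max 0 (1/((q:ℝ)*B) - P) := by ring
      _ ≤ (q:ℝ) * max 0 (1/((q:ℝ)*B) - P) := mul_le_mul_of_nonneg_right hphi hm0
      _ = 1 * max 0 (1/B - (q:ℝ)*P) := by rw [hqmax, one_mul]

private lemma annuli_vol {n : ℕ} (hn : 1 ≤ n) {B P : ℝ} (hB : B = (n:ℝ)+1) (hP : 0 < P) :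
    volume (⋃ q ∈ Finset.Icc 1 n, ⋃ a ∈ (Finset.range (q+1)).filter (fun a => Nat.gcd a q = 1),
        ({u : ℝ | P < |u - (a:ℝ)/(q:ℝ)| ∧ |u - (a:ℝ)/(q:ℝ)| ≤ 1/(q*B)} ∩ Set.Icc 0 1))
      ≤ ENNReal.ofReal (3/(4*P*B^2)) := by
  have hBpos : (0:ℝ) < B := by rw [hB]; positivity
  have hrnn : ∀ q : ℕ, 0 ≤ (if q % 2 = 1 then (2:ℝ) else 1) * max 0 (1/B - q*P) :=
    fun q => mul_nonneg (by split <;> norm_num) (le_max_left _ _)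
  have hperq : ∀ q ∈ Finset.Icc 1 n,
      (∑ a ∈ (Finset.range (q+1)).filter (fun a => Nat.gcd a q = 1),
        volume ({u : ℝ | P < |u - (a:ℝ)/(q:ℝ)| ∧ |u - (a:ℝ)/(q:ℝ)| ≤ 1/(q*B)} ∩ Set.Icc 0 1))
        ≤ ENNReal.ofReal ((if q % 2 = 1 then (2:ℝ) else 1) * max 0 (1/B - q*P)) := by
    intro q hq
    rw [Finset.mem_Icc] at hq
    rcases eq_or_lt_of_le hq.1 with heq | hlt
    · subst heq
      have hfil : (Finset.range 2).filter (fun a => Nat.gcd a 1 = 1) = Finset.range 2 := by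
        apply Finset.filter_true_of_mem
        intro a _
        exact Nat.gcd_one_right a
      rw [hfil, Finset.sum_range_succ, Finset.sum_range_succ, Finset.sum_range_zero, zero_add]
      have h0 := ann_vol_le_one (a := 0) hBpos hP (by norm_num)
      have h1 := ann_vol_le_one (a := 1) hBpos hP (by norm_num)
      calc _ ≤ ENNReal.ofReal (max 0 (1/B - P)) + ENNReal.ofReal (max 0 (1/B - P)) := add_le_add h0 h1
        _ ≤ _ := by
            rw [← ENNReal.ofReal_add (le_max_left _ _) (le_max_left _ _)]
            apply ENNReal.ofReal_le_ofReal
            simp only [Nat.cast_one]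
            norm_num [two_mul]
    · have hq2 : 2 ≤ q := hlt
      have hcard := coprime_count hq2
      have hbound : ∀ a ∈ (Finset.range (q+1)).filter (fun a => Nat.gcd a q = 1),
          volume ({u : ℝ | P < |u - (a:ℝ)/(q:ℝ)| ∧ |u - (a:ℝ)/(q:ℝ)| ≤ 1/(q*B)} ∩ Set.Icc 0 1)
            ≤ ENNReal.ofReal (2 * max 0 (1/((q:ℝ)*B) - P)) :=
        fun a _ => ann_vol_le hq.1 hBpos hP
      calc _ ≤ ((Finset.range (q+1)).filter (fun a => Nat.gcd a q = 1)).card •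
              ENNReal.ofReal (2 * max 0 (1/((q:ℝ)*B) - P)) := Finset.sum_le_card_nsmul _ _ _ hbound
        _ = ENNReal.ofReal ((((Finset.range (q+1)).filter (fun a => Nat.gcd a q = 1)).card : ℝ)
              * (2 * max 0 (1/((q:ℝ)*B) - P))) := by
            rw [nsmul_eq_mul, ← ENNReal.ofReal_natCast, ← ENNReal.ofReal_mul (Nat.cast_nonneg _)]
        _ ≤ _ := ENNReal.ofReal_le_ofReal (phi_bound hq.1 hBpos hP hcard hq2)
  calc volume _ ≤ ∑ q ∈ Finset.Icc 1 n, volume (⋃ a ∈ (Finset.range (q+1)).filter (fun a => Nat.gcd a q = 1),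
        ({u : ℝ | P < |u - (a:ℝ)/(q:ℝ)| ∧ |u - (a:ℝ)/(q:ℝ)| ≤ 1/(q*B)} ∩ Set.Icc 0 1)) :=
        measure_biUnion_finset_le _ _
    _ ≤ ∑ q ∈ Finset.Icc 1 n, ENNReal.ofReal ((if q % 2 = 1 then (2:ℝ) else 1) * max 0 (1/B - q*P)) :=
        Finset.sum_le_sum fun q hq => le_trans (measure_biUnion_finset_le _ _) (hperq q hq)
    _ = ENNReal.ofReal (∑ q ∈ Finset.Icc 1 n, (if q % 2 = 1 then (2:ℝ) else 1) * max 0 (1/B - q*P)) :=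
        (ENNReal.ofReal_sum_of_nonneg (fun q _ => hrnn q)).symm
    _ ≤ ENNReal.ofReal (3/(4*P*B^2)) := ENNReal.ofReal_le_ofReal (sum_rho_le hBpos hP)


private lemma convex_bisector (x y : ℝ) : Convex ℝ {v : ℝ | |v - x| ≤ |v - y|} := by
  have heq : {v : ℝ | |v - x| ≤ |v - y|} = {v : ℝ | 2*(y - x)*v ≤ y^2 - x^2} := by
    ext v
    simp only [Set.mem_setOf_eq]
    constructor
    · intro h
      have h2 : (v-x)^2 ≤ (v-y)^2 := by
        have := pow_le_pow_left₀ (abs_nonneg (v-x)) h 2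
        rwa [sq_abs, sq_abs] at this
      nlinarith
    · intro h
      have h2 : (v-x)^2 ≤ (v-y)^2 := by nlinarith
      exact sq_le_sq.mp h2
  rw [heq]
  exact convex_halfSpace_le (IsLinearMap.mk (fun a b => by ring) (fun c a => by simp only [smul_eq_mul]; ring)) _


end LargeSieveAux

set_option maxHeartbeats 1000000 in
/-- Deterministic step deducing the Theorem from the Lemma: if every measurable
`𝔪 ⊆ [0,1]` of measure `1/A` (with `A = 8δ⁻²`) satisfies
`∫_𝔪 |S|² ≤ (1/2)∫_0^1 |S|²`, and `Q² ≥ 1536π δ⁻⁴ N`, then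
`Σ_{q≤Q} Σ_{(a,q)=1} |S(a/q)|² ≥ (Q²δ²/32) Σ |a_n|²`. -/
theorem large_sieve_lower_bound_of_M_small (N : ℕ) (a : ℕ → ℂ)
    (hpos : 0 < ∑ n ∈ Finset.Icc 1 N, ‖a n‖ ^ 2)
    (S : ℝ → ℂ)
    (hS : ∀ u : ℝ, S u = ∑ n ∈ Finset.Icc 1 N,
      a n * Complex.exp (2 * Real.pi * Complex.I * n * u))
    (δ : ℝ) (hδ : δ ∈ Set.Ioo (0:ℝ) 1) (A : ℝ) (hA : A = 8 * δ⁻¹ ^ 2)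
    (Q : ℝ) (hQpos : 0 < Q) (hQ : Q ^ 2 ≥ 1536 * Real.pi * δ⁻¹ ^ 4 * N)
    (hM : ∀ 𝔪 : Set ℝ, MeasurableSet 𝔪 → 𝔪 ⊆ Set.Icc (0:ℝ) 1 →
      volume 𝔪 = ENNReal.ofReal (1 / A) →
      (∫ u in 𝔪, ‖S u‖ ^ 2) ≤
        (1 / 2) * ∫ u in (0:ℝ)..1, ‖S u‖ ^ 2) :
    (∑ q ∈ Finset.Icc 1 ⌊Q⌋₊, ∑ r ∈ (Finset.Icc 1 q).filter (fun r => Nat.gcd r q = 1),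
        ‖S ((r : ℝ) / q)‖ ^ 2) ≥
      Q ^ 2 * δ ^ 2 / 32 * ∑ n ∈ Finset.Icc 1 N, ‖a n‖ ^ 2 := by
  classical
  -- basic positivity facts
  have hδ0 : 0 < δ := hδ.1
  have hδ1 : δ < 1 := hδ.2
  have hdd : δ⁻¹ * δ = 1 := inv_mul_cancel₀ hδ0.ne'
  have hd1 : (1:ℝ) ≤ δ⁻¹ := by nlinarith [inv_pos.mpr hδ0]
  have hd2 : (1:ℝ) ≤ δ⁻¹^2 := one_le_pow₀ hd1
  have hd4 : (1:ℝ) ≤ δ⁻¹^4 := one_le_pow₀ hd1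
  have hN1 : 1 ≤ N := by
    rcases Nat.eq_zero_or_pos N with h | h
    · subst h; simp at hpos
    · exact h
  have hNR : (1:ℝ) ≤ (N:ℝ) := by exact_mod_cast hN1
  have hπ3 : (3:ℝ) < Real.pi := Real.pi_gt_three
  have hApos : 0 < A := by rw [hA]; positivity
  have hA8 : 8 ≤ A := by rw [hA]; nlinarith
  set Z := ∑ k ∈ Finset.Icc 1 N, ‖a k‖ ^ 2 with hZ
  have hZpos : 0 < Z := hpos
  -- replace S
  have hSfun : S = S0 N a := by
    funext u; rw [hS u]; rfl
  rw [hSfun] at hM ⊢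
  -- Q is large
  have hQbig : (4608:ℝ) ≤ Q^2 := by nlinarith [hQ, mul_pos (mul_pos (by norm_num : (0:ℝ) < 1536) Real.pi_pos) (lt_of_lt_of_le zero_lt_one hd4)]
  have hQ1 : 1 < Q := by nlinarith
  set n := ⌊Q⌋₊ with hn
  have hn1 : 1 ≤ n := Nat.le_floor (by exact_mod_cast hQ1.le)
  set B : ℝ := (n:ℝ) + 1 with hB
  have hQB : Q < B := Nat.lt_floor_add_one Q
  have hBpos : 0 < B := lt_trans hQpos hQB
  set P : ℝ := 3*A/(4*B^2) with hPdef
  have hPpos : 0 < P := by rw [hPdef]; positivity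
  set w : ℝ := 2*P with hw
  have hwpos : 0 < w := by rw [hw]; positivity
  -- windows
  set X : Finset ℝ := pts n with hX
  set W : ℝ → Set ℝ := fun x =>
    (Set.Icc (0:ℝ) 1 ∩ Metric.closedBall x P) ∩ ⋂ y ∈ X, {v : ℝ | |v - x| ≤ |v - y|} with hWdef
  have hWclosed : ∀ x, IsClosed (W x) := by
    intro x
    refine (isClosed_Icc.inter Metric.isClosed_closedBall).inter (isClosed_biInter fun y _ => ?_)
    exact isClosed_le ((continuous_id.sub continuous_const).abs) ((continuous_id.sub continuous_const).abs)
  have hWmeas : ∀ x, MeasurableSet (W x) := fun x => (hWclosed x).measurableSet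
  have hWsub : ∀ x, W x ⊆ Set.Icc (0:ℝ) 1 := fun x v hv => hv.1.1
  have hWconv : ∀ x, Convex ℝ (W x) := by
    intro x
    refine ((convex_Icc 0 1).inter (convex_closedBall x P)).inter ?_
    exact convex_iInter₂ fun y _ => convex_bisector x y
  have hWvol : ∀ x, volume (W x) ≤ ENNReal.ofReal w := by
    intro x
    calc volume (W x) ≤ volume (Metric.closedBall x P) := measure_mono (fun v hv => hv.1.2)
      _ = ENNReal.ofReal (2*P) := Real.volume_closedBall x P
      _ = ENNReal.ofReal w := by rw [hw]
  have hxW : ∀ x ∈ X, x ∈ W x := by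
    intro x hx
    refine ⟨⟨pts_mem_Icc hx, Metric.mem_closedBall_self hPpos.le⟩, Set.mem_iInter₂.mpr fun y _ => ?_⟩
    simp only [Set.mem_setOf_eq, sub_self, abs_zero]
    exact abs_nonneg _
  -- per-window inequality
  have hwin : ∀ x ∈ X, (1/w) * (∫ u in W x, FF N a u) - (∫ u in W x, |DD N a u|) ≤ FF N a x :=
    fun x hx => window_lemma (FF_deriv N a) (DD_cont N a) (FF_cont N a) (FF_nonneg N a)
      (hWmeas x) (hWsub x) (hWconv x) (hxW x hx) hwpos (hWvol x)
  -- midpoints and disjointness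
  set Mid : Finset ℝ := (X ×ˢ X).image (fun p => (p.1 + p.2)/2) with hMid
  have hMidvol : volume (↑Mid : Set ℝ) = 0 := (Mid.finite_toSet).measure_zero _
  have hW'meas : ∀ x, MeasurableSet (W x \ ↑Mid) :=
    fun x => (hWmeas x).diff (Mid.finite_toSet).measurableSet
  have hW'ae : ∀ x, (W x \ ↑Mid : Set ℝ) =ᵐ[volume] W x :=
    fun x => diff_ae_eq_self.mpr (measure_mono_null Set.inter_subset_right hMidvol)
  have hdisj : (↑X : Set ℝ).Pairwise (Function.onFun Disjoint (fun x => W x \ ↑Mid)) := by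
    intro x hx y hy hxy
    rw [Function.onFun, Set.disjoint_left]
    rintro v ⟨hvx, hvM⟩ ⟨hvy, _⟩
    have h1 : |v - x| ≤ |v - y| := Set.mem_iInter₂.mp hvx.2 y (by exact_mod_cast hy)
    have h2 : |v - y| ≤ |v - x| := Set.mem_iInter₂.mp hvy.2 x (by exact_mod_cast hx)
    have heq : |v - x| = |v - y| := le_antisymm h1 h2
    rcases abs_eq_abs.mp heq with h | h
    · exact hxy (by linarith)
    · apply hvM
      have hv : v = (x + y)/2 := by linarith
      rw [hMid]
      simp only [Finset.coe_image, Set.mem_image, Finset.mem_coe]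
      exact ⟨(x, y), by
        refine Finset.mem_product.mpr ⟨by exact_mod_cast hx, by exact_mod_cast hy⟩, by rw [hv]⟩
  -- sum over windows = integral over the (a.e.-disjoint) union
  set U : Set ℝ := ⋃ x ∈ X, W x with hU
  set U' : Set ℝ := ⋃ x ∈ X, (W x \ ↑Mid) with hU'
  have hUsub : U ⊆ Set.Icc (0:ℝ) 1 := Set.iUnion₂_subset fun x _ => hWsub x
  have hUmeas : MeasurableSet U := by
    exact MeasurableSet.biUnion X.countable_toSet (fun x _ => hWmeas x)
  have hU'subU : U' ⊆ U := Set.iUnion₂_mono fun x _ => Set.diff_subset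
  have hU'ae : U' =ᵐ[volume] U := by
    rw [MeasureTheory.ae_eq_set]
    constructor
    · rw [Set.diff_eq_empty.mpr hU'subU]; exact measure_empty
    · refine measure_mono_null ?_ hMidvol
      rintro v ⟨hvU, hvU'⟩
      rw [hU, Set.mem_iUnion₂] at hvU
      obtain ⟨x, hx, hvx⟩ := hvU
      by_contra hvM
      exact hvU' (Set.mem_iUnion₂.mpr ⟨x, hx, hvx, hvM⟩)
  have hkey : ∀ g : ℝ → ℝ, Continuous g →
      ∑ x ∈ X, ∫ u in W x, g u = ∫ u in U', g u := by
    intro g hg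
    rw [hU', MeasureTheory.integral_biUnion_finset X (fun x _ => hW'meas x) hdisj
      (fun x _ => (hg.integrableOn_Icc).mono_set ((Set.diff_subset).trans (hWsub x)))]
    exact (Finset.sum_congr rfl fun x _ => setIntegral_congr_set (hW'ae x)).symm
  -- total integral of FF over [0,1] is Z
  have hFI : IntegrableOn (FF N a) (Set.Icc (0:ℝ) 1) volume := (FF_cont N a).integrableOn_Icc
  have hDI : IntegrableOn (fun u => |DD N a u|) (Set.Icc (0:ℝ) 1) volume :=
    ((DD_cont N a).abs).integrableOn_Icc
  have hTint : ∫ u in Set.Icc (0:ℝ) 1, FF N a u = Z := by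
    rw [MeasureTheory.integral_Icc_eq_integral_Ioc,
      ← intervalIntegral.integral_of_le (by norm_num : (0:ℝ) ≤ 1)]
    exact parseval N a
  -- the uncovered set and hM
  set m0 : Set ℝ := Set.Icc (0:ℝ) 1 \ U with hm0
  have hm0meas : MeasurableSet m0 := measurableSet_Icc.diff hUmeas
  have hm0sub : m0 ⊆ Set.Icc (0:ℝ) 1 := Set.diff_subset
  have hcov : m0 ⊆ Set.Icc (0:ℝ) 1 \ (⋃ x ∈ X, Metric.closedBall x P) := by
    rintro u ⟨huI, huU⟩
    refine ⟨huI, fun hball => ?_⟩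
    rw [Set.mem_iUnion₂] at hball
    obtain ⟨x₀, hx₀, hux₀⟩ := hball
    have hXne : X.Nonempty := ⟨0, Finset.mem_insert_self _ _⟩
    obtain ⟨x, hxmem, hxmin⟩ := Finset.exists_min_image X (fun y => |u - y|) hXne
    apply huU
    rw [hU, Set.mem_iUnion₂]
    refine ⟨x, hxmem, ⟨⟨huI, ?_⟩, Set.mem_iInter₂.mpr fun y hy => hxmin y hy⟩⟩
    rw [Metric.mem_closedBall, Real.dist_eq]
    calc |u - x| ≤ |u - x₀| := hxmin x₀ hx₀
      _ ≤ P := by rw [← Real.dist_eq]; exact hux₀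
  have hm0vol : volume m0 ≤ ENNReal.ofReal (1/A) := by
    have h1 := (measure_mono (hcov.trans (uncovered_subset hn1 rfl hPpos))).trans
      (annuli_vol hn1 rfl hPpos)
    have h2 : 3/(4*P*B^2) = 1/A := by
      rw [hPdef]
      field_simp
    rwa [h2] at h1
  obtain ⟨m', hm'meas, hm0m', hm'sub, hm'vol⟩ :=
    pad hm0meas hm0sub (by positivity : (0:ℝ) < 1/A) (by rw [div_le_one hApos]; linarith) hm0vol
  have hm'int : ∫ u in m', FF N a u ≤ Z/2 := by
    have h := hM m' hm'meas hm'sub hm'vol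
    have h2 : ∫ u in (0:ℝ)..1, ‖S0 N a u‖ ^ 2 = Z := parseval N a
    calc ∫ u in m', FF N a u = ∫ u in m', ‖S0 N a u‖^2 := rfl
      _ ≤ (1/2) * ∫ u in (0:ℝ)..1, ‖S0 N a u‖ ^ 2 := h
      _ = Z/2 := by rw [h2]; ring
  -- main term lower bound
  have hFsum : ∑ x ∈ X, ∫ u in W x, FF N a u ≥ Z/2 := by
    have h1 : ∑ x ∈ X, ∫ u in W x, FF N a u = ∫ u in U, FF N a u := by
      rw [hkey _ (FF_cont N a)]
      exact setIntegral_congr_set hU'ae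
    have hsplit : (∫ u in Set.Icc (0:ℝ) 1 ∩ U, FF N a u) + ∫ u in m0, FF N a u
        = ∫ u in Set.Icc (0:ℝ) 1, FF N a u := MeasureTheory.integral_inter_add_diff hUmeas hFI
    have hIU : Set.Icc (0:ℝ) 1 ∩ U = U := Set.inter_eq_self_of_subset_right hUsub
    have hm0le : ∫ u in m0, FF N a u ≤ ∫ u in m', FF N a u := by
      refine setIntegral_mono_set (hFI.mono_set hm'sub)
        (Filter.Eventually.of_forall fun u => FF_nonneg N a u)
        (Filter.Eventually.of_forall hm0m')
    rw [h1]
    rw [hIU] at hsplit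
    rw [hTint] at hsplit
    linarith
  -- error term upper bound
  have hDsum : ∑ x ∈ X, ∫ u in W x, |DD N a u| ≤ 4 * Real.pi * N * Z := by
    rw [hkey _ ((DD_cont N a).abs)]
    calc ∫ u in U', |DD N a u| ≤ ∫ u in Set.Icc (0:ℝ) 1, |DD N a u| := by
          refine setIntegral_mono_set hDI
            (Filter.Eventually.of_forall fun u => abs_nonneg _)
            (Filter.Eventually.of_forall (hU'subU.trans hUsub))
      _ = ∫ u in (0:ℝ)..1, |DD N a u| := by
          rw [MeasureTheory.integral_Icc_eq_integral_Ioc,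
            ← intervalIntegral.integral_of_le (by norm_num : (0:ℝ) ≤ 1)]
      _ ≤ 4 * Real.pi * N * Z := DD_int_bound N a hN1
  -- sum of F over all points
  have hXlower : ∑ x ∈ X, FF N a x ≥ (1/w) * (Z/2) - 4 * Real.pi * N * Z := by
    have h1 : ∑ x ∈ X, ((1/w) * (∫ u in W x, FF N a u) - ∫ u in W x, |DD N a u|) ≤
        ∑ x ∈ X, FF N a x := Finset.sum_le_sum hwin
    have h2 : ∑ x ∈ X, ((1/w) * (∫ u in W x, FF N a u) - ∫ u in W x, |DD N a u|)
        = (1/w) * (∑ x ∈ X, ∫ u in W x, FF N a u) - ∑ x ∈ X, ∫ u in W x, |DD N a u| := by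
      rw [Finset.sum_sub_distrib, Finset.mul_sum]
    rw [h2] at h1
    have h3 : (1/w) * (Z/2) ≤ (1/w) * (∑ x ∈ X, ∫ u in W x, FF N a u) :=
      mul_le_mul_of_nonneg_left hFsum (by positivity)
    linarith
  -- F 0 is small
  have hF0 : FF N a 0 ≤ (N:ℝ) * Z := by
    have hS00 : S0 N a 0 = ∑ k ∈ Finset.Icc 1 N, a k := by
      unfold S0
      refine Finset.sum_congr rfl fun k _ => ?_
      norm_num
    have habs : ‖S0 N a 0‖ ≤ ∑ k ∈ Finset.Icc 1 N, ‖a k‖ := by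
      rw [hS00]
      refine (norm_sum_le _ _).trans ?_
      exact le_of_eq (Finset.sum_congr rfl fun k _ => rfl)
    have hCS : (∑ k ∈ Finset.Icc 1 N, ‖a k‖) ^ 2 ≤ Z * N := by
      have h := Finset.sum_mul_sq_le_sq_mul_sq (Finset.Icc 1 N) (fun k => ‖a k‖) (fun _ => 1)
      simp only [mul_one, one_pow] at h
      calc (∑ k ∈ Finset.Icc 1 N, ‖a k‖) ^ 2
          ≤ (∑ k ∈ Finset.Icc 1 N, ‖a k‖ ^ 2) * ∑ k ∈ Finset.Icc 1 N, (1:ℝ) := h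
        _ = Z * N := by rw [Finset.sum_const, Nat.card_Icc]; simp [← hZ]
    have h2 : FF N a 0 = ‖S0 N a 0‖ ^ 2 := rfl
    rw [h2]
    calc ‖S0 N a 0‖ ^ 2 ≤ (∑ k ∈ Finset.Icc 1 N, ‖a k‖) ^ 2 :=
          pow_le_pow_left₀ (norm_nonneg _) habs 2
      _ ≤ Z * N := hCS
      _ = (N:ℝ) * Z := by ring
  -- relate sum over X to the double sum
  have h0notin : (0:ℝ) ∉ (Finset.Icc 1 n).biUnion (fun q =>
      ((Finset.Icc 1 q).filter (fun r => Nat.gcd r q = 1)).image (fun r : ℕ => (r:ℝ)/(q:ℝ))) := by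
    intro h
    rw [Finset.mem_biUnion] at h
    obtain ⟨q, hq, h⟩ := h
    rw [Finset.mem_image] at h
    obtain ⟨r, hr, hr0⟩ := h
    rw [Finset.mem_filter, Finset.mem_Icc] at hr
    rw [Finset.mem_Icc] at hq
    have h1 : (0:ℝ) < (r:ℝ) := by exact_mod_cast hr.1.1
    have h2 : (0:ℝ) < (q:ℝ) := by exact_mod_cast hq.1
    have : (0:ℝ) < (r:ℝ)/(q:ℝ) := by positivity
    rw [hr0] at this
    exact lt_irrefl 0 this
  have hdouble : ∑ x ∈ X, FF N a x ≤ FF N a 0 +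
      ∑ q ∈ Finset.Icc 1 n, ∑ r ∈ (Finset.Icc 1 q).filter (fun r => Nat.gcd r q = 1),
        FF N a ((r:ℝ)/(q:ℝ)) := by
    rw [hX]
    unfold pts
    rw [Finset.sum_insert h0notin]
    have hb := sum_biUnion_le' (Finset.Icc 1 n) (fun q =>
      ((Finset.Icc 1 q).filter (fun r => Nat.gcd r q = 1)).image (fun r : ℕ => (r:ℝ)/(q:ℝ)))
      (FF_nonneg N a)
    have hc : ∀ q ∈ Finset.Icc 1 n,
        ∑ x ∈ ((Finset.Icc 1 q).filter (fun r => Nat.gcd r q = 1)).image (fun r : ℕ => (r:ℝ)/(q:ℝ)),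
          FF N a x ≤ ∑ r ∈ (Finset.Icc 1 q).filter (fun r => Nat.gcd r q = 1), FF N a ((r:ℝ)/(q:ℝ)) :=
      fun q _ => sum_image_le' _ _ (FF_nonneg N a)
    have := Finset.sum_le_sum hc
    linarith
  -- final arithmetic
  have hgoal_sum : ∑ q ∈ Finset.Icc 1 n, ∑ r ∈ (Finset.Icc 1 q).filter (fun r => Nat.gcd r q = 1),
      FF N a ((r:ℝ)/(q:ℝ)) ≥ (1/w) * (Z/2) - 4 * Real.pi * N * Z - (N:ℝ) * Z := by
    linarith [hXlower, hdouble, hF0]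
  have hwZ : (1/w) * (Z/2) = B^2/(3*A) * Z := by
    rw [hw, hPdef]
    field_simp
    ring
  -- arithmetic: B^2/(3A) - 4πN - N ≥ Q²δ²/32
  have harith : B^2/(3*A) - 4 * Real.pi * N - N ≥ Q^2 * δ^2/32 := by
    have hδ2 : δ^2 * δ⁻¹^2 = 1 := by
      field_simp
    have hQ2B : Q^2 ≤ B^2 := pow_le_pow_left₀ hQpos.le hQB.le 2
    have hAd : 3*A = 24 * δ⁻¹^2 := by rw [hA]; ring
    have h24 : B^2/(3*A) ≥ Q^2 * δ^2/24 := by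
      rw [hAd, ge_iff_le, div_le_div_iff₀ (by norm_num) (by positivity)]
      calc Q^2 * δ^2 * (24 * δ⁻¹^2) = 24 * Q^2 * (δ^2 * δ⁻¹^2) := by ring
        _ = 24 * Q^2 := by rw [hδ2]; ring
        _ ≤ 24 * B^2 := by nlinarith
        _ = B^2 * 24 := by ring
    have hslack : Q^2 * δ^2/24 - Q^2 * δ^2/32 = Q^2 * δ^2/96 := by ring
    have hQδ : Q^2 * δ^2/96 ≥ 16 * Real.pi * N := by
      have h1 : Q^2 * δ^2 ≥ 1536 * Real.pi * δ⁻¹^4 * N * δ^2 := by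
        have := mul_le_mul_of_nonneg_right hQ (sq_nonneg δ)
        linarith
      have h2 : 1536 * Real.pi * δ⁻¹^4 * N * δ^2 = 1536 * Real.pi * N * δ⁻¹^2 * (δ⁻¹^2 * δ^2) := by
        ring
      have h3 : δ⁻¹^2 * δ^2 = 1 := by field_simp
      rw [h2, h3, mul_one] at h1
      have h4 : 1536 * Real.pi * N * δ⁻¹^2 ≥ 1536 * Real.pi * N := by
        nlinarith [mul_pos (mul_pos (by norm_num : (0:ℝ) < 1536) Real.pi_pos) (lt_of_lt_of_le zero_lt_one hNR)]
      linarith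
    nlinarith [hQδ, h24, mul_pos Real.pi_pos (lt_of_lt_of_le zero_lt_one hNR)]
  -- conclude
  have hfinal : (1/w) * (Z/2) - 4 * Real.pi * N * Z - (N:ℝ) * Z ≥ Q^2 * δ^2/32 * Z := by
    rw [hwZ]
    have := mul_le_mul_of_nonneg_right harith hZpos.le
    nlinarith [this]
  calc ∑ q ∈ Finset.Icc 1 n, ∑ r ∈ (Finset.Icc 1 q).filter (fun r => Nat.gcd r q = 1),
        ‖S0 N a ((r:ℝ)/(q:ℝ))‖ ^ 2
      = ∑ q ∈ Finset.Icc 1 n, ∑ r ∈ (Finset.Icc 1 q).filter (fun r => Nat.gcd r q = 1),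
        FF N a ((r:ℝ)/(q:ℝ)) := rfl
    _ ≥ Q^2 * δ^2/32 * Z := le_trans hfinal hgoal_sum
end
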